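/- arXiv:1801.09075 — 5 statements merged into one kernel-verified Lean document; each statement's English description precedes it below -/
import Mathlib

section
/- Let G = G₁:G₂ be a multigraph that is the union of two multigraphs G₁ and G₂ having exactly two vertices u and v in common and no common edges. Let K₁ and K₂ be the multigraphs obtained from G₁ and G₂, respectively, by identifying the vertices u and v. Then for every nonzero complex number A, with σ = A + 1 + A^{−1}, one has σ·H(G₁:G₂)(A) = H(K₁)(A)·H(K₂)(A) + (σ+1)·H(G₁)(A)·H(G₂)(A) + H(K₁)(A)·H(G₂)(A) + H(K₂)(A)·H(G₁)(A). -/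
open Relation

section Tools
variable {V : Type*}

/-- Quotients by Relation.EqvGen-equivalent relations are equivalent. -/
def quotCongr {r s : V → V → Prop} (hrs : ∀ x y, r x y → Relation.EqvGen s x y)
    (hsr : ∀ x y, s x y → Relation.EqvGen r x y) : Quot r ≃ Quot s where
  toFun := Quot.lift (Quot.mk s) (fun a b h => Quot.eqvGen_sound (hrs a b h))
  invFun := Quot.lift (Quot.mk r) (fun a b h => Quot.eqvGen_sound (hsr a b h))
  left_inv := by apply Quot.ind; intro a; rfl
  right_inv := by apply Quot.ind; intro a; rfl

def quotFalseEquiv {r : V → V → Prop} (h : ∀ x y, ¬ r x y) : Quot r ≃ V where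
  toFun := Quot.lift id (fun a b hab => absurd hab (h a b))
  invFun := Quot.mk r
  left_inv := by apply Quot.ind; intro a; rfl
  right_inv := fun a => rfl

theorem eqvGen_false_iff {x y : V} : Relation.EqvGen (fun _ _ : V => False) x y ↔ x = y := by
  constructor
  · intro h
    induction h with
    | rel a b h => exact h.elim
    | refl a => rfl
    | symm a b _ ih => exact ih.symm
    | trans a b c _ _ ih1 ih2 => exact ih1.trans ih2
  · rintro rfl; exact Relation.EqvGen.refl _

theorem eqvGen_pair_iff {r : V → V → Prop} {u v x y : V} :
    Relation.EqvGen (fun a b => (a = u ∧ b = v) ∨ r a b) x y ↔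
      Relation.EqvGen r x y ∨ (Relation.EqvGen r x u ∧ Relation.EqvGen r v y) ∨ (Relation.EqvGen r x v ∧ Relation.EqvGen r u y) := by
  constructor
  · intro h
    induction h with
    | rel a b h =>
      rcases h with ⟨rfl, rfl⟩ | h
      · exact Or.inr (Or.inl ⟨Relation.EqvGen.refl _, Relation.EqvGen.refl _⟩)
      · exact Or.inl (Relation.EqvGen.rel _ _ h)
    | refl a => exact Or.inl (Relation.EqvGen.refl _)
    | symm a b _ ih =>
      rcases ih with h | ⟨h1, h2⟩ | ⟨h1, h2⟩
      · exact Or.inl (Relation.EqvGen.symm _ _ h)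
      · exact Or.inr (Or.inr ⟨Relation.EqvGen.symm _ _ h2, Relation.EqvGen.symm _ _ h1⟩)
      · exact Or.inr (Or.inl ⟨Relation.EqvGen.symm _ _ h2, Relation.EqvGen.symm _ _ h1⟩)
    | trans a b c _ _ ih1 ih2 =>
      rcases ih1 with h1 | ⟨h1, h2⟩ | ⟨h1, h2⟩ <;>
        rcases ih2 with g1 | ⟨g1, g2⟩ | ⟨g1, g2⟩
      · exact Or.inl (Relation.EqvGen.trans _ _ _ h1 g1)
      · exact Or.inr (Or.inl ⟨Relation.EqvGen.trans _ _ _ h1 g1, g2⟩)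
      · exact Or.inr (Or.inr ⟨Relation.EqvGen.trans _ _ _ h1 g1, g2⟩)
      · exact Or.inr (Or.inl ⟨h1, Relation.EqvGen.trans _ _ _ h2 g1⟩)
      · exact Or.inl (Relation.EqvGen.trans _ _ _ (Relation.EqvGen.trans _ _ _ h1
          (Relation.EqvGen.symm _ _ (Relation.EqvGen.trans _ _ _ h2 g1))) g2)
      · exact Or.inl (Relation.EqvGen.trans _ _ _ h1 g2)
      · exact Or.inr (Or.inr ⟨h1, Relation.EqvGen.trans _ _ _ h2 g1⟩)
      · exact Or.inl (Relation.EqvGen.trans _ _ _ h1 g2)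
      · exact Or.inl (Relation.EqvGen.trans _ _ _ (Relation.EqvGen.trans _ _ _ h1
          (Relation.EqvGen.symm _ _ (Relation.EqvGen.trans _ _ _ h2 g1))) g2)
  · intro h
    have base : ∀ a b : V, Relation.EqvGen r a b →
        Relation.EqvGen (fun a b => (a = u ∧ b = v) ∨ r a b) a b := fun a b hab =>
      Relation.EqvGen.mono (fun x y hxy => Or.inr hxy) _ _ hab
    have huv : Relation.EqvGen (fun a b => (a = u ∧ b = v) ∨ r a b) u v :=
      Relation.EqvGen.rel _ _ (Or.inl ⟨rfl, rfl⟩)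
    rcases h with h | ⟨h1, h2⟩ | ⟨h1, h2⟩
    · exact base _ _ h
    · exact Relation.EqvGen.trans _ _ _ (Relation.EqvGen.trans _ _ _ (base _ _ h1) huv) (base _ _ h2)
    · exact Relation.EqvGen.trans _ _ _ (Relation.EqvGen.trans _ _ _ (base _ _ h1)
        (Relation.EqvGen.symm _ _ huv)) (base _ _ h2)

end Tools

section
variable {V : Type*} {r : V → V → Prop} {u v : V}

theorem card_quot_pair_of_rel (h : Relation.EqvGen r u v) :
    Nat.card (Quot fun a b => (a = u ∧ b = v) ∨ r a b) = Nat.card (Quot r) := by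
  refine Nat.card_congr (quotCongr ?_ ?_)
  · rintro x y (⟨rfl, rfl⟩ | hxy)
    · exact h
    · exact Relation.EqvGen.rel _ _ hxy
  · intro x y hxy; exact Relation.EqvGen.rel _ _ (Or.inr hxy)

theorem card_quot_pair_of_not_rel [Finite V] (h : ¬ Relation.EqvGen r u v) :
    Nat.card (Quot r) = Nat.card (Quot fun a b => (a = u ∧ b = v) ∨ r a b) + 1 := by
  classical
  set r' : V → V → Prop := fun a b => (a = u ∧ b = v) ∨ r a b with hr'
  have huv : Quot.mk r u ≠ Quot.mk r v := fun hc => h (Quot.eqvGen_exact hc)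
  -- the map from Quot r to Quot r'
  let φ : Quot r → Quot r' := Quot.lift (Quot.mk r') (fun a b hab => Quot.sound (Or.inr hab))
  have hφmk : ∀ x : V, φ (Quot.mk r x) = Quot.mk r' x := fun x => rfl
  -- restricted bijection
  have key : Function.Bijective (fun c : {c : Quot r // c ≠ Quot.mk r v} => φ c.1) := by
    constructor
    · rintro ⟨c₁, hc₁⟩ ⟨c₂, hc₂⟩ hc
      induction c₁ using Quot.ind with | _ x =>
      induction c₂ using Quot.ind with | _ y =>
      simp only [hφmk] at hc
      have := Quot.eqvGen_exact hc
      rw [hr'] at this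
      rcases eqvGen_pair_iff.mp this with h1 | ⟨h1, h2⟩ | ⟨h1, h2⟩
      · exact Subtype.ext (Quot.eqvGen_sound h1)
      · exact absurd (Quot.eqvGen_sound (Relation.EqvGen.symm _ _ h2)) hc₂
      · exact absurd (Quot.eqvGen_sound h1) hc₁
    · intro d
      induction d using Quot.ind with | _ x =>
      by_cases hx : Quot.mk r x = Quot.mk r v
      · refine ⟨⟨Quot.mk r u, huv⟩, ?_⟩
        have h1 : Quot.mk r' u = Quot.mk r' v := Quot.sound (Or.inl ⟨rfl, rfl⟩)
        have h2 : Quot.mk r' v = Quot.mk r' x :=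
          Quot.eqvGen_sound ((Relation.EqvGen.mono (fun a b hab => Or.inr hab) _ _)
            (Relation.EqvGen.symm _ _ (Quot.eqvGen_exact hx)))
        exact (h1.trans h2).symm ▸ rfl
      · exact ⟨⟨Quot.mk r x, hx⟩, rfl⟩
  have e1 : {c : Quot r // c ≠ Quot.mk r v} ≃ Quot r' := Equiv.ofBijective _ key
  have e2 : Quot r ≃ Option {c : Quot r // c ≠ Quot.mk r v} := by
    refine ⟨fun c => if hc : c = Quot.mk r v then none else some ⟨c, hc⟩,
      fun o => o.elim (Quot.mk r v) Subtype.val, fun c => ?_, fun o => ?_⟩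
    · by_cases hc : c = Quot.mk r v <;> simp [hc]
    · rcases o with _ | ⟨c, hc⟩
      · simp
      · simp [hc]
  rw [Nat.card_congr e2, Nat.card_congr e1.symm]
  have : Finite {c : Quot r // c ≠ Quot.mk r v} := by
    have : Finite (Quot r) := Quot.finite r
    infer_instance
  have : Fintype {c : Quot r // c ≠ Quot.mk r v} := Fintype.ofFinite _
  rw [Nat.card_eq_fintype_card, Nat.card_eq_fintype_card, Fintype.card_option]
end


variable {V₁ V₂ : Type*}

/-- relation on a sum type acting within each summand -/
def sumRel (r₁ : V₁ → V₁ → Prop) (r₂ : V₂ → V₂ → Prop) : V₁ ⊕ V₂ → V₁ ⊕ V₂ → Prop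
  | .inl a, .inl b => r₁ a b
  | .inr a, .inr b => r₂ a b
  | _, _ => False

def quotSumEquiv (r₁ : V₁ → V₁ → Prop) (r₂ : V₂ → V₂ → Prop) :
    Quot (sumRel r₁ r₂) ≃ Quot r₁ ⊕ Quot r₂ where
  toFun := Quot.lift
    (Sum.elim (fun a => Sum.inl (Quot.mk r₁ a)) (fun b => Sum.inr (Quot.mk r₂ b)))
    (by rintro (a | a) (b | b) h <;> simp only [sumRel] at h <;>
        simp [Quot.sound h])
  invFun := Sum.elim
    (Quot.lift (fun a => Quot.mk _ (Sum.inl a)) (fun a b h => Quot.sound h))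
    (Quot.lift (fun b => Quot.mk _ (Sum.inr b)) (fun a b h => Quot.sound h))
  left_inv := by apply Quot.ind; rintro (a | a) <;> rfl
  right_inv := by rintro (c | c) <;> induction c using Quot.ind <;> rfl

/-- EqvGen of a sum relation characterized componentwise -/
theorem eqvGen_sumRel {r₁ : V₁ → V₁ → Prop} {r₂ : V₂ → V₂ → Prop} {x y : V₁ ⊕ V₂}
    (h : Relation.EqvGen (sumRel r₁ r₂) x y) :
    (∀ a b, x = .inl a → y = .inl b → Relation.EqvGen r₁ a b) ∧
    (∀ a b, x = .inr a → y = .inr b → Relation.EqvGen r₂ a b) ∧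
    ((∃ a, x = Sum.inl a) ↔ (∃ a, y = Sum.inl a)) := by
  induction h with
  | rel x y h =>
    rcases x with a | a <;> rcases y with b | b <;> simp only [sumRel] at h
    · refine ⟨?_, ?_, by simp⟩
      · intro a' b' ha hb; cases Sum.inl.inj ha; cases Sum.inl.inj hb; exact .rel _ _ h
      · intro a' b' ha _; cases ha
    · refine ⟨?_, ?_, by simp⟩
      · intro a' b' ha _; cases ha
      · intro a' b' ha hb; cases Sum.inr.inj ha; cases Sum.inr.inj hb; exact .rel _ _ h
  | refl x =>
    refine ⟨fun a b ha hb => ?_, fun a b ha hb => ?_, Iff.rfl⟩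
    · cases ha; cases Sum.inl.inj hb; exact .refl _
    · cases ha; cases Sum.inr.inj hb; exact .refl _
    
  | symm x y _ ih =>
    exact ⟨fun a b ha hb => .symm _ _ (ih.1 b a hb ha),
      fun a b ha hb => .symm _ _ (ih.2.1 b a hb ha), ih.2.2.symm⟩
  | trans x y z _ _ ih1 ih2 =>
    refine ⟨fun a b ha hb => ?_, fun a b ha hb => ?_, ih1.2.2.trans ih2.2.2⟩
    · obtain ⟨c, hc⟩ := ih1.2.2.mp ⟨a, ha⟩
      exact .trans _ _ _ (ih1.1 a c ha hc) (ih2.1 c b hc hb)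
    · rcases y with c | c
      · exact absurd (ih1.2.2.mpr ⟨c, rfl⟩) (by simp [ha])
      · exact .trans _ _ _ (ih1.2.1 a c ha rfl) (ih2.2.1 c b rfl hb)

theorem eqvGen_sumRel_inl {r₁ : V₁ → V₁ → Prop} {r₂ : V₂ → V₂ → Prop} {a b : V₁} :
    Relation.EqvGen (sumRel r₁ r₂) (.inl a) (.inl b) ↔ Relation.EqvGen r₁ a b := by
  constructor
  · exact fun h => (eqvGen_sumRel h).1 a b rfl rfl
  · intro h
    induction h with
    | rel a b h => exact .rel _ _ h
    | refl a => exact .refl _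
    | symm _ _ _ ih => exact .symm _ _ ih
    | trans _ _ _ _ _ ih1 ih2 => exact .trans _ _ _ ih1 ih2

theorem eqvGen_sumRel_inr {r₁ : V₁ → V₁ → Prop} {r₂ : V₂ → V₂ → Prop} {a b : V₂} :
    Relation.EqvGen (sumRel r₁ r₂) (.inr a) (.inr b) ↔ Relation.EqvGen r₂ a b := by
  constructor
  · exact fun h => (eqvGen_sumRel h).2.1 a b rfl rfl
  · intro h
    induction h with
    | rel a b h => exact .rel _ _ h
    | refl a => exact .refl _
    | symm _ _ _ ih => exact .symm _ _ ih
    | trans _ _ _ _ _ ih1 ih2 => exact .trans _ _ _ ih1 ih2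

theorem not_eqvGen_sumRel_inl_inr {r₁ : V₁ → V₁ → Prop} {r₂ : V₂ → V₂ → Prop} {a : V₁} {b : V₂} :
    ¬ Relation.EqvGen (sumRel r₁ r₂) (.inl a) (.inr b) := fun h => by
  have := (eqvGen_sumRel h).2.2.mp ⟨a, rfl⟩
  simp at this


def quotQuotEquiv {V : Type*} (p r : V → V → Prop) :
    Quot (fun x y : Quot p => ∃ a b, r a b ∧ Quot.mk p a = x ∧ Quot.mk p b = y) ≃
      Quot (fun a b => p a b ∨ r a b) where
  toFun := Quot.lift
    (Quot.lift (Quot.mk _) (fun a b h => Quot.sound (Or.inl h)))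
    (by rintro x y ⟨a, b, hr, rfl, rfl⟩; exact Quot.sound (Or.inr hr))
  invFun := Quot.lift (fun a => Quot.mk _ (Quot.mk p a))
    (by rintro a b (hp | hr)
        · exact congrArg _ (Quot.sound hp)
        · exact Quot.sound ⟨a, b, hr, rfl, rfl⟩)
  left_inv := by apply Quot.ind; apply Quot.ind; intro a; rfl
  right_inv := by apply Quot.ind; intro a; rfl


/-- A multigraph: a finite vertex set `V`, a finite edge set `E`, and a map assigning
to each edge an unordered pair of (not necessarily distinct) endpoints in `V`;
loops and multiple edges are allowed. -/
structure Multigraph where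
  V : Type
  E : Type
  [finV : Finite V]
  [fintypeE : Fintype E]
  [decE : DecidableEq E]
  ends : E → Sym2 V

attribute [instance] Multigraph.finV Multigraph.fintypeE Multigraph.decE

namespace Multigraph

/-- `μ`: the number of connected components of the spanning subgraph of `G`
with edge set `S`. -/
noncomputable def mu (G : Multigraph) (S : Finset G.E) : ℕ :=
  Nat.card (Quot (fun x y : G.V => ∃ e ∈ S, G.ends e = s(x, y)))

/-- `β`: the first Betti number `|S| − |V| + μ` of the spanning subgraph of `G`
with edge set `S`. -/
noncomputable def betti (G : Multigraph) (S : Finset G.E) : ℕ :=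
  S.card + G.mu S - Nat.card G.V

/-- The Yamada polynomial of `G` evaluated at a nonzero complex number `A`:
`H(G)(A) = Σ_{F ⊆ E(G)} (−1)^{|F| + μ(G−F)} (−A − 2 − A⁻¹)^{β(G−F)}`. -/
noncomputable def yamada (G : Multigraph) (A : ℂ) : ℂ :=
  ∑ F : Finset G.E, (-1 : ℂ) ^ (F.card + G.mu Fᶜ) * (-A - 2 - A⁻¹) ^ (G.betti Fᶜ)

/-- `G` is connected: the whole graph has exactly one connected component. -/
def Connected (G : Multigraph) : Prop := G.mu Finset.univ = 1

end Multigraph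

/-- The multigraph obtained from `G` by identifying the vertices `u` and `v`
(keeping all edges; an edge with endpoints `u` and `v` becomes a loop). -/
def Multigraph.identify (G : Multigraph) (u v : G.V) : Multigraph where
  V := Quot (fun x y : G.V => x = u ∧ y = v)
  E := G.E
  ends := fun e => (G.ends e).map (Quot.mk _)

/-- The union `G₁:G₂` of two multigraphs `G₁` and `G₂` having exactly the two vertices
`u₁ = u₂` and `v₁ = v₂` in common and no common edges. -/
def Multigraph.glue (G₁ G₂ : Multigraph) (u₁ v₁ : G₁.V) (u₂ v₂ : G₂.V) : Multigraph where
  V := Quot (fun x y : G₁.V ⊕ G₂.V =>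
    (x = Sum.inl u₁ ∧ y = Sum.inr u₂) ∨ (x = Sum.inl v₁ ∧ y = Sum.inr v₂))
  E := G₁.E ⊕ G₂.E
  ends := fun e =>
    Sum.elim (fun e₁ => (G₁.ends e₁).map (fun x => Quot.mk _ (Sum.inl x)))
             (fun e₂ => (G₂.ends e₂).map (fun x => Quot.mk _ (Sum.inr x))) e


open Relation

theorem card_quot_le_pair {V : Type*} [Finite V] {r : V → V → Prop} {u v : V} :
    Nat.card (Quot r) ≤ Nat.card (Quot fun a b => (a = u ∧ b = v) ∨ r a b) + 1 := by
  by_cases h : Relation.EqvGen r u v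
  · rw [card_quot_pair_of_rel h]; omega
  · exact (card_quot_pair_of_not_rel h).le

namespace Multigraph

/-- The connectivity relation of the spanning subgraph with edge set `S`. -/
def relAux (G : Multigraph) (S : Finset G.E) : G.V → G.V → Prop :=
  fun a b => ∃ e ∈ S, G.ends e = s(a, b)

theorem mu_def (G : Multigraph) (S : Finset G.E) :
    G.mu S = Nat.card (Quot (G.relAux S)) := rfl

theorem sym2_exists {α : Type*} (z : Sym2 α) : ∃ a b, z = s(a, b) :=
  Sym2.ind (fun a b => ⟨a, b, rfl⟩) z

theorem mapRel_iff (G : Multigraph) (S : Finset G.E) {W : Type*} (q : G.V → W) (x y : W) :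
    (∃ e ∈ S, Sym2.map q (G.ends e) = s(x, y)) ↔
      ∃ a b, G.relAux S a b ∧ q a = x ∧ q b = y := by
  constructor
  · rintro ⟨e, he, hm⟩
    obtain ⟨a, b, hab⟩ := sym2_exists (G.ends e)
    rw [hab, Sym2.map_pair_eq] at hm
    rcases Sym2.eq_iff.mp hm with ⟨h1, h2⟩ | ⟨h1, h2⟩
    · exact ⟨a, b, ⟨e, he, hab⟩, h1, h2⟩
    · exact ⟨b, a, ⟨e, he, hab.trans (Sym2.eq_swap)⟩, h2, h1⟩
  · rintro ⟨a, b, ⟨e, he, hab⟩, rfl, rfl⟩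
    exact ⟨e, he, by rw [hab, Sym2.map_pair_eq]⟩

theorem identify_mu (G : Multigraph) (u v : G.V) (S : Finset G.E) :
    (G.identify u v).mu S =
      Nat.card (Quot fun a b : G.V => (a = u ∧ b = v) ∨ G.relAux S a b) :=
  Nat.card_congr ((Quot.congrRight (fun x y => mapRel_iff G S _ x y)).trans
    (quotQuotEquiv _ (G.relAux S)))

theorem identify_card (G : Multigraph) {u v : G.V} (h : u ≠ v) :
    Nat.card G.V = Nat.card (G.identify u v).V + 1 := by
  have h0 : ¬ Relation.EqvGen (fun _ _ : G.V => False) u v := by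
    rw [eqvGen_false_iff]; exact h
  have := card_quot_pair_of_not_rel h0
  rw [Nat.card_congr (quotFalseEquiv (fun _ _ hf => hf))] at this
  rw [this]
  congr 1
  exact Nat.card_congr (Quot.congrRight (by simp))

theorem mu_pos (G : Multigraph) [Nonempty G.V] (S : Finset G.E) : 1 ≤ G.mu S := by
  rw [mu_def]
  have h : Nonempty (Quot (G.relAux S)) := ⟨Quot.mk _ (Classical.arbitrary G.V)⟩
  exact @Nat.card_pos _ h _

theorem card_le_mu (G : Multigraph) (S : Finset G.E) : Nat.card G.V ≤ S.card + G.mu S := by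
  classical
  induction S using Finset.cons_induction with
  | empty =>
    rw [mu_def, Nat.card_congr (quotFalseEquiv (r := G.relAux ∅)
      (by rintro x y ⟨e, he, -⟩; exact absurd he (Finset.notMem_empty e)))]
    simp
  | cons e S he ih =>
    obtain ⟨c, d, hcd⟩ := sym2_exists (G.ends e)
    have hrel : ∀ x y, G.relAux (Finset.cons e S he) x y ↔
        ((x = c ∧ y = d) ∨ ((x = d ∧ y = c) ∨ G.relAux S x y)) := by
      intro x y
      constructor
      · rintro ⟨f, hf, hxy⟩
        rcases Finset.mem_cons.mp hf with rfl | hf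
        · rw [hcd] at hxy
          rcases Sym2.eq_iff.mp hxy with ⟨rfl, rfl⟩ | ⟨rfl, rfl⟩
          · exact Or.inl ⟨rfl, rfl⟩
          · exact Or.inr (Or.inl ⟨rfl, rfl⟩)
        · exact Or.inr (Or.inr ⟨f, hf, hxy⟩)
      · rintro (⟨rfl, rfl⟩ | ⟨rfl, rfl⟩ | ⟨f, hf, hxy⟩)
        · exact ⟨e, Finset.mem_cons_self e S, hcd⟩
        · exact ⟨e, Finset.mem_cons_self e S, hcd.trans Sym2.eq_swap⟩
        · exact ⟨f, Finset.mem_cons.mpr (Or.inr hf), hxy⟩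
    -- drop the redundant reversed pair
    have e2 : Quot (fun x y : G.V => (x = c ∧ y = d) ∨ ((x = d ∧ y = c) ∨ G.relAux S x y)) ≃
        Quot (fun x y : G.V => (x = c ∧ y = d) ∨ G.relAux S x y) := by
      refine quotCongr ?_ ?_
      · rintro x y (⟨rfl, rfl⟩ | ⟨rfl, rfl⟩ | hxy)
        · exact .rel _ _ (Or.inl ⟨rfl, rfl⟩)
        · exact .symm _ _ (.rel _ _ (Or.inl ⟨rfl, rfl⟩))
        · exact .rel _ _ (Or.inr hxy)
      · rintro x y (⟨rfl, rfl⟩ | hxy)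
        · exact .rel _ _ (Or.inl ⟨rfl, rfl⟩)
        · exact .rel _ _ (Or.inr (Or.inr hxy))
    have hmu : G.mu (Finset.cons e S he) =
        Nat.card (Quot (fun x y : G.V => (x = c ∧ y = d) ∨ G.relAux S x y)) := by
      rw [mu_def]
      exact Nat.card_congr ((Quot.congrRight hrel).trans e2)
    have hle : Nat.card (Quot (G.relAux S)) ≤
        Nat.card (Quot (fun x y : G.V => (x = c ∧ y = d) ∨ G.relAux S x y)) + 1 :=
      card_quot_le_pair
    rw [Finset.card_cons, ← mu_def] at *
    omega

end Multigraph

namespace Multigraph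

theorem identify_mu_of_conn {G : Multigraph} {u v : G.V} {S : Finset G.E}
    (h : Relation.EqvGen (G.relAux S) u v) : (G.identify u v).mu S = G.mu S := by
  rw [identify_mu, mu_def]; exact card_quot_pair_of_rel h

theorem identify_mu_of_not_conn {G : Multigraph} {u v : G.V} {S : Finset G.E}
    (h : ¬ Relation.EqvGen (G.relAux S) u v) : G.mu S = (G.identify u v).mu S + 1 := by
  rw [identify_mu, mu_def]; exact card_quot_pair_of_not_rel h

/-- The disjoint union of two multigraphs. -/
def sumG (G₁ G₂ : Multigraph) : Multigraph where
  V := G₁.V ⊕ G₂.V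
  E := G₁.E ⊕ G₂.E
  ends := Sum.elim (fun e => (G₁.ends e).map .inl) (fun e => (G₂.ends e).map .inr)

theorem relAux_sumG_iff (G₁ G₂ : Multigraph) (S : Finset (G₁.E ⊕ G₂.E))
    (x y : G₁.V ⊕ G₂.V) :
    (sumG G₁ G₂).relAux S x y ↔
      sumRel (G₁.relAux S.toLeft) (G₂.relAux S.toRight) x y := by
  constructor
  · rintro ⟨e, he, hxy⟩
    rcases e with e | e
    · obtain ⟨c, d, hcd⟩ := sym2_exists (G₁.ends e)
      have : ((G₁.ends e).map Sum.inl : Sym2 (G₁.V ⊕ G₂.V)) = s(x, y) := hxy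
      rw [hcd, Sym2.map_pair_eq] at this
      rcases Sym2.eq_iff.mp this with ⟨h1, h2⟩ | ⟨h1, h2⟩
      · subst h1; subst h2
        exact show G₁.relAux S.toLeft c d from
          ⟨e, Finset.mem_toLeft.mpr he, hcd⟩
      · subst h1; subst h2
        exact show G₁.relAux S.toLeft d c from
          ⟨e, Finset.mem_toLeft.mpr he, hcd.trans Sym2.eq_swap⟩
    · obtain ⟨c, d, hcd⟩ := sym2_exists (G₂.ends e)
      have : ((G₂.ends e).map Sum.inr : Sym2 (G₁.V ⊕ G₂.V)) = s(x, y) := hxy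
      rw [hcd, Sym2.map_pair_eq] at this
      rcases Sym2.eq_iff.mp this with ⟨h1, h2⟩ | ⟨h1, h2⟩
      · subst h1; subst h2
        exact show G₂.relAux S.toRight c d from
          ⟨e, Finset.mem_toRight.mpr he, hcd⟩
      · subst h1; subst h2
        exact show G₂.relAux S.toRight d c from
          ⟨e, Finset.mem_toRight.mpr he, hcd.trans Sym2.eq_swap⟩
  · intro h
    rcases x with a | a <;> rcases y with b | b <;> simp only [sumRel] at h
    · obtain ⟨e, he, hab⟩ := h
      refine ⟨Sum.inl e, Finset.mem_toLeft.mp he, ?_⟩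
      show Sym2.map Sum.inl (G₁.ends e) = _
      rw [hab, Sym2.map_pair_eq]; rfl
    · obtain ⟨e, he, hab⟩ := h
      refine ⟨Sum.inr e, Finset.mem_toRight.mp he, ?_⟩
      show Sym2.map Sum.inr (G₂.ends e) = _
      rw [hab, Sym2.map_pair_eq]; rfl

theorem glue_mu (G₁ G₂ : Multigraph) (u₁ v₁ : G₁.V) (u₂ v₂ : G₂.V)
    (S : Finset (G₁.E ⊕ G₂.E)) :
    (Multigraph.glue G₁ G₂ u₁ v₁ u₂ v₂).mu S =
      Nat.card (Quot fun a b : G₁.V ⊕ G₂.V =>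
        ((a = .inl u₁ ∧ b = .inr u₂) ∨ (a = .inl v₁ ∧ b = .inr v₂)) ∨
          (sumG G₁ G₂).relAux S a b) := by
  have hend : ∀ e : G₁.E ⊕ G₂.E,
      (Multigraph.glue G₁ G₂ u₁ v₁ u₂ v₂).ends e =
        Sym2.map (Quot.mk _) ((sumG G₁ G₂).ends e) := by
    rintro (e | e)
    · show Sym2.map _ (G₁.ends e) = Sym2.map _ (Sym2.map Sum.inl (G₁.ends e))
      exact (Sym2.map_map _).symm
    · show Sym2.map _ (G₂.ends e) = Sym2.map _ (Sym2.map Sum.inr (G₂.ends e))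
      exact (Sym2.map_map _).symm
  refine (mu_def _ _).trans ?_
  refine Nat.card_congr (Equiv.trans (Quot.congrRight (fun x y => ?_))
    (quotQuotEquiv _ ((sumG G₁ G₂).relAux S)))
  show (∃ e ∈ S, (Multigraph.glue G₁ G₂ u₁ v₁ u₂ v₂).ends e = s(x, y)) ↔ _
  simp only [hend]
  exact mapRel_iff (sumG G₁ G₂) S _ x y

end Multigraph

namespace Multigraph

variable {G₁ G₂ : Multigraph} {u₁ v₁ : G₁.V} {u₂ v₂ : G₂.V}

theorem glue_mu_count (S : Finset (G₁.E ⊕ G₂.E)) {k : ℕ}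
    (hk : (Relation.EqvGen (G₁.relAux S.toLeft) u₁ v₁ ∧
            Relation.EqvGen (G₂.relAux S.toRight) u₂ v₂ → k = 1) ∧
          (¬ (Relation.EqvGen (G₁.relAux S.toLeft) u₁ v₁ ∧
            Relation.EqvGen (G₂.relAux S.toRight) u₂ v₂) → k = 2)) :
    G₁.mu S.toLeft + G₂.mu S.toRight =
      (Multigraph.glue G₁ G₂ u₁ v₁ u₂ v₂).mu S + k := by
  classical
  have hbase : Nat.card (Quot (sumRel (G₁.relAux S.toLeft) (G₂.relAux S.toRight))) =
      G₁.mu S.toLeft + G₂.mu S.toRight := by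
    rw [Nat.card_congr (quotSumEquiv _ _), Nat.card_sum, mu_def, mu_def]
  have hstep1 : Nat.card (Quot (sumRel (G₁.relAux S.toLeft) (G₂.relAux S.toRight))) =
      Nat.card (Quot fun a b : G₁.V ⊕ G₂.V => (a = .inl v₁ ∧ b = .inr v₂) ∨
        sumRel (G₁.relAux S.toLeft) (G₂.relAux S.toRight) a b) + 1 :=
    card_quot_pair_of_not_rel not_eqvGen_sumRel_inl_inr
  have hglue : (Multigraph.glue G₁ G₂ u₁ v₁ u₂ v₂).mu S =
      Nat.card (Quot fun a b : G₁.V ⊕ G₂.V => (a = .inl u₁ ∧ b = .inr u₂) ∨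
        ((a = .inl v₁ ∧ b = .inr v₂) ∨
          sumRel (G₁.relAux S.toLeft) (G₂.relAux S.toRight) a b)) := by
    rw [glue_mu]
    refine Nat.card_congr (Quot.congrRight fun a b => ?_)
    rw [relAux_sumG_iff]
    tauto
  have hconn : Relation.EqvGen (fun a b : G₁.V ⊕ G₂.V => (a = .inl v₁ ∧ b = .inr v₂) ∨
        sumRel (G₁.relAux S.toLeft) (G₂.relAux S.toRight) a b) (.inl u₁) (.inr u₂) ↔
      (Relation.EqvGen (G₁.relAux S.toLeft) u₁ v₁ ∧
        Relation.EqvGen (G₂.relAux S.toRight) u₂ v₂) := by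
    rw [eqvGen_pair_iff]
    constructor
    · rintro (h | ⟨h1, h2⟩ | ⟨h1, h2⟩)
      · exact absurd h not_eqvGen_sumRel_inl_inr
      · exact ⟨eqvGen_sumRel_inl.mp h1, .symm _ _ (eqvGen_sumRel_inr.mp h2)⟩
      · exact absurd h1 not_eqvGen_sumRel_inl_inr
    · rintro ⟨hc1, hc2⟩
      exact Or.inr (Or.inl ⟨eqvGen_sumRel_inl.mpr hc1,
        eqvGen_sumRel_inr.mpr (.symm _ _ hc2)⟩)
  by_cases hc : Relation.EqvGen (G₁.relAux S.toLeft) u₁ v₁ ∧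
      Relation.EqvGen (G₂.relAux S.toRight) u₂ v₂
  · rw [hk.1 hc]
    have := card_quot_pair_of_rel (hconn.mpr hc)
    omega
  · rw [hk.2 hc]
    have := card_quot_pair_of_not_rel (fun hh => hc (hconn.mp hh))
    omega

theorem glue_card (h₁ : u₁ ≠ v₁) (h₂ : u₂ ≠ v₂) :
    Nat.card G₁.V + Nat.card G₂.V =
      Nat.card (Multigraph.glue G₁ G₂ u₁ v₁ u₂ v₂).V + 2 := by
  classical
  have hbase : Nat.card (Quot (fun _ _ : G₁.V ⊕ G₂.V => False)) =
      Nat.card G₁.V + Nat.card G₂.V := by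
    rw [Nat.card_congr (quotFalseEquiv (fun _ _ hf => hf)), Nat.card_sum]
  have hstep1 : Nat.card (Quot (fun _ _ : G₁.V ⊕ G₂.V => False)) =
      Nat.card (Quot fun a b : G₁.V ⊕ G₂.V =>
        (a = .inl v₁ ∧ b = .inr v₂) ∨ False) + 1 := by
    refine card_quot_pair_of_not_rel ?_
    rw [eqvGen_false_iff]
    simp
  have hstep2 : Nat.card (Quot fun a b : G₁.V ⊕ G₂.V =>
        (a = .inl v₁ ∧ b = .inr v₂) ∨ False) =
      Nat.card (Quot fun a b : G₁.V ⊕ G₂.V => (a = .inl u₁ ∧ b = .inr u₂) ∨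
        ((a = .inl v₁ ∧ b = .inr v₂) ∨ False)) + 1 := by
    refine card_quot_pair_of_not_rel ?_
    intro hh
    rcases eqvGen_pair_iff.mp hh with h | ⟨ha, hb⟩ | ⟨ha, hb⟩ <;>
      simp only [eqvGen_false_iff] at * <;> simp_all
  have hV : Nat.card (Multigraph.glue G₁ G₂ u₁ v₁ u₂ v₂).V =
      Nat.card (Quot fun a b : G₁.V ⊕ G₂.V => (a = .inl u₁ ∧ b = .inr u₂) ∨
        ((a = .inl v₁ ∧ b = .inr v₂) ∨ False)) := by
    refine Nat.card_congr (Quot.congrRight fun a b => ?_)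
    tauto
  omega

end Multigraph

namespace Multigraph
open Classical in
/-- `u`~`v` in the spanning subgraph on the complement of `F`. -/
def connP (G : Multigraph) (u v : G.V) (F : Finset G.E) : Prop :=
  Relation.EqvGen (G.relAux Fᶜ) u v

/-- summand of the Yamada polynomial -/
noncomputable def term (G : Multigraph) (t : ℂ) (F : Finset G.E) : ℂ :=
  (-1) ^ (F.card + G.mu Fᶜ) * t ^ (G.betti Fᶜ)

open Classical in
noncomputable def aS (G : Multigraph) (u v : G.V) (t : ℂ) : ℂ :=
  ∑ F : Finset G.E, if G.connP u v F then G.term t F else 0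

open Classical in
noncomputable def bS (G : Multigraph) (u v : G.V) (t : ℂ) : ℂ :=
  ∑ F : Finset G.E, if G.connP u v F then 0 else G.term t F

theorem yamada_term (G : Multigraph) {A t : ℂ} (ht : t = -A - 2 - A⁻¹) :
    G.yamada A = ∑ F : Finset G.E, G.term t F := by
  rw [yamada, ht]; rfl

theorem yamada_eq_aS_bS (G : Multigraph) (u v : G.V) {A t : ℂ} (ht : t = -A - 2 - A⁻¹) :
    G.yamada A = G.aS u v t + G.bS u v t := by
  classical
  rw [yamada_term G ht, aS, bS, ← Finset.sum_add_distrib]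
  refine Finset.sum_congr rfl fun F _ => ?_
  by_cases h : G.connP u v F <;> simp [h]

theorem yamada_identify (G : Multigraph) {u v : G.V} (huv : u ≠ v) {A t : ℂ}
    (ht : t = -A - 2 - A⁻¹) :
    (G.identify u v).yamada A = t * G.aS u v t - G.bS u v t := by
  classical
  have hne : Nonempty G.V := ⟨u⟩
  rw [yamada_term (G.identify u v) ht, aS, bS, Finset.mul_sum, ← Finset.sum_sub_distrib]
  show ∑ F : Finset G.E, (G.identify u v).term t F = _
  refine Finset.sum_congr rfl fun F _ => ?_
  have hcard := G.identify_card huv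
  have hle := G.card_le_mu Fᶜ
  have hpos := G.mu_pos Fᶜ
  by_cases h : G.connP u v F
  · rw [if_pos h, if_pos h]
    have hmu : (G.identify u v).mu Fᶜ = G.mu Fᶜ := identify_mu_of_conn h
    have hb : (G.identify u v).betti Fᶜ = G.betti Fᶜ + 1 := by
      simp only [betti, hmu]
      have hc : (Fᶜ : Finset (G.identify u v).E).card = (Fᶜ : Finset G.E).card := rfl
      omega
    show (-1) ^ (F.card + (G.identify u v).mu Fᶜ) * t ^ ((G.identify u v).betti Fᶜ) = _
    rw [hb, hmu, term, pow_succ]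
    ring
  · rw [if_neg h, if_neg h]
    have hmu : G.mu Fᶜ = (G.identify u v).mu Fᶜ + 1 := identify_mu_of_not_conn h
    have hb : (G.identify u v).betti Fᶜ = G.betti Fᶜ := by
      simp only [betti, hmu]
      have hc : (Fᶜ : Finset (G.identify u v).E).card = (Fᶜ : Finset G.E).card := rfl
      omega
    show (-1) ^ (F.card + (G.identify u v).mu Fᶜ) * t ^ ((G.identify u v).betti Fᶜ) = _
    rw [hb, term, hmu, show F.card + ((G.identify u v).mu Fᶜ + 1) =
      (F.card + (G.identify u v).mu Fᶜ) + 1 from rfl, pow_succ]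
    ring

end Multigraph

namespace Multigraph

theorem compl_disjSum {α β : Type*} [Fintype α] [Fintype β] [DecidableEq α] [DecidableEq β]
    (s : Finset α) (t : Finset β) : (s.disjSum t)ᶜ = sᶜ.disjSum tᶜ := by
  ext x
  rcases x with a | a <;> simp

variable {G₁ G₂ : Multigraph} {u₁ v₁ : G₁.V} {u₂ v₂ : G₂.V}

def finsetSumEquiv {α β : Type*} [Fintype α] [Fintype β] [DecidableEq α] [DecidableEq β] :
    (Finset α × Finset β) ≃ Finset (α ⊕ β) where
  toFun := fun p => p.1.disjSum p.2
  invFun := fun F => (F.toLeft, F.toRight)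
  left_inv := fun p => by simp
  right_inv := fun F => by simp [Finset.toLeft_disjSum_toRight]

theorem yamada_glue (h₁ : u₁ ≠ v₁) (h₂ : u₂ ≠ v₂) {A t : ℂ} (ht : t = -A - 2 - A⁻¹) :
    (Multigraph.glue G₁ G₂ u₁ v₁ u₂ v₂).yamada A =
      G₁.yamada A * G₂.yamada A - (1 + t) * (G₁.aS u₁ v₁ t * G₂.aS u₂ v₂ t) := by
  classical
  have hne₁ : Nonempty G₁.V := ⟨u₁⟩
  have hne₂ : Nonempty G₂.V := ⟨u₂⟩
  set Gg := Multigraph.glue G₁ G₂ u₁ v₁ u₂ v₂ with hGL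
  have hsum : Gg.yamada A = ∑ p : Finset G₁.E × Finset G₂.E, Gg.term t (p.1.disjSum p.2) := by
    rw [yamada_term Gg ht]
    exact (Fintype.sum_equiv finsetSumEquiv (fun p => Gg.term t (p.1.disjSum p.2))
      (fun F => Gg.term t F) (fun p => rfl)).symm
  -- termwise evaluation
  have hterm : ∀ (F₁ : Finset G₁.E) (F₂ : Finset G₂.E),
      Gg.term t (F₁.disjSum F₂) =
        if G₁.connP u₁ v₁ F₁ ∧ G₂.connP u₂ v₂ F₂
          then -t * (G₁.term t F₁ * G₂.term t F₂)
          else G₁.term t F₁ * G₂.term t F₂ := by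
    intro F₁ F₂
    have hC : ((F₁.disjSum F₂)ᶜ : Finset (G₁.E ⊕ G₂.E)) = F₁ᶜ.disjSum F₂ᶜ :=
      compl_disjSum F₁ F₂
    have hL : ((F₁.disjSum F₂)ᶜ).toLeft = F₁ᶜ := by rw [hC]; simp
    have hR : ((F₁.disjSum F₂)ᶜ).toRight = F₂ᶜ := by rw [hC]; simp
    have hcardF : (F₁.disjSum F₂).card = F₁.card + F₂.card := Finset.card_disjSum _ _
    have hcardFc : ((F₁.disjSum F₂)ᶜ).card = F₁ᶜ.card + F₂ᶜ.card := by
      rw [hC]; exact Finset.card_disjSum _ _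
    have hle₁ := G₁.card_le_mu F₁ᶜ
    have hle₂ := G₂.card_le_mu F₂ᶜ
    have hpos₁ := G₁.mu_pos F₁ᶜ
    have hpos₂ := G₂.mu_pos F₂ᶜ
    have hcardV := glue_card h₁ h₂ (G₁ := G₁) (G₂ := G₂)
    rw [← hGL] at hcardV
    by_cases hc : G₁.connP u₁ v₁ F₁ ∧ G₂.connP u₂ v₂ F₂
    · rw [if_pos hc]
      have hmu : G₁.mu F₁ᶜ + G₂.mu F₂ᶜ = Gg.mu (F₁.disjSum F₂)ᶜ + 1 := by
        have := glue_mu_count (G₁ := G₁) (G₂ := G₂) (u₁ := u₁) (v₁ := v₁) (u₂ := u₂)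
          (v₂ := v₂) ((F₁.disjSum F₂)ᶜ) (k := 1)
          ⟨fun _ => rfl, fun hn => absurd (by rw [hL, hR]; exact hc) hn⟩
        rw [hL, hR] at this
        exact this
      have hb : Gg.betti (F₁.disjSum F₂)ᶜ = G₁.betti F₁ᶜ + G₂.betti F₂ᶜ + 1 := by
        simp only [betti, hcardFc]
        have hg1 : ((F₁.disjSum F₂)ᶜ : Finset Gg.E).card =
            ((F₁.disjSum F₂)ᶜ : Finset (G₁.E ⊕ G₂.E)).card := rfl
        omega
      have hexp : F₁.card + G₁.mu F₁ᶜ + (F₂.card + G₂.mu F₂ᶜ) =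
          ((F₁.disjSum F₂).card + Gg.mu (F₁.disjSum F₂)ᶜ) + 1 := by omega
      show (-1) ^ ((F₁.disjSum F₂).card + Gg.mu (F₁.disjSum F₂)ᶜ) *
          t ^ (Gg.betti (F₁.disjSum F₂)ᶜ) = _
      rw [hb, term, term]
      have hsign : ((-1 : ℂ)) ^ ((F₁.disjSum F₂).card + Gg.mu (F₁.disjSum F₂)ᶜ) =
          -(((-1 : ℂ)) ^ (F₁.card + G₁.mu F₁ᶜ) * (-1) ^ (F₂.card + G₂.mu F₂ᶜ)) := by
        have h' : ((-1 : ℂ)) ^ (F₁.card + G₁.mu F₁ᶜ) * (-1) ^ (F₂.card + G₂.mu F₂ᶜ) =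
            (-1 : ℂ) ^ (((F₁.disjSum F₂).card + Gg.mu (F₁.disjSum F₂)ᶜ) + 1) := by
          rw [← pow_add, hexp]
        rw [h', pow_succ]
        ring
      rw [hsign, pow_succ, pow_add]
      ring
    · rw [if_neg hc]
      have hmu : G₁.mu F₁ᶜ + G₂.mu F₂ᶜ = Gg.mu (F₁.disjSum F₂)ᶜ + 2 := by
        have := glue_mu_count (G₁ := G₁) (G₂ := G₂) (u₁ := u₁) (v₁ := v₁) (u₂ := u₂)
          (v₂ := v₂) ((F₁.disjSum F₂)ᶜ) (k := 2)
          ⟨fun hy => absurd (by rw [hL, hR] at hy; exact hy) hc, fun _ => rfl⟩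
        rw [hL, hR] at this
        exact this
      have hb : Gg.betti (F₁.disjSum F₂)ᶜ = G₁.betti F₁ᶜ + G₂.betti F₂ᶜ := by
        simp only [betti, hcardFc]
        have hg1 : ((F₁.disjSum F₂)ᶜ : Finset Gg.E).card =
            ((F₁.disjSum F₂)ᶜ : Finset (G₁.E ⊕ G₂.E)).card := rfl
        omega
      have hexp : F₁.card + G₁.mu F₁ᶜ + (F₂.card + G₂.mu F₂ᶜ) =
          ((F₁.disjSum F₂).card + Gg.mu (F₁.disjSum F₂)ᶜ) + 2 := by omega
      show (-1) ^ ((F₁.disjSum F₂).card + Gg.mu (F₁.disjSum F₂)ᶜ) *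
          t ^ (Gg.betti (F₁.disjSum F₂)ᶜ) = _
      rw [hb, term, term]
      have hsign : ((-1 : ℂ)) ^ (F₁.card + G₁.mu F₁ᶜ) * (-1) ^ (F₂.card + G₂.mu F₂ᶜ) =
          (-1 : ℂ) ^ ((F₁.disjSum F₂).card + Gg.mu (F₁.disjSum F₂)ᶜ) := by
        rw [← pow_add, hexp, pow_add]
        norm_num
      rw [← hsign, pow_add]
      ring
  -- algebraic reorganization of the double sum
  rw [hsum]
  rw [Fintype.sum_prod_type]
  have : ∀ (F₁ : Finset G₁.E) (F₂ : Finset G₂.E),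
      Gg.term t (F₁.disjSum F₂) =
        G₁.term t F₁ * G₂.term t F₂ +
          (-1 - t) * ((if G₁.connP u₁ v₁ F₁ then G₁.term t F₁ else 0) *
            (if G₂.connP u₂ v₂ F₂ then G₂.term t F₂ else 0)) := by
    intro F₁ F₂
    rw [hterm F₁ F₂]
    by_cases hc1 : G₁.connP u₁ v₁ F₁ <;> by_cases hc2 : G₂.connP u₂ v₂ F₂ <;>
      simp [hc1, hc2] <;> ring
  simp only [this]
  rw [yamada_term G₁ ht, yamada_term G₂ ht, aS, aS]
  simp only [Finset.sum_add_distrib, Finset.mul_sum, ← Finset.sum_mul, ← Finset.mul_sum]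
  ring
end Multigraph
/-- Let `G₁:G₂` be the union of two multigraphs with exactly two
vertices `u`, `v` in common and no common edges, and let `K₁`, `K₂` be obtained
from `G₁`, `G₂` by identifying `u` and `v`.  Then for all nonzero `A`, with
`σ = A + 1 + A⁻¹`:
`σ·H(G₁:G₂) = H(K₁)H(K₂) + (σ+1)H(G₁)H(G₂) + H(K₁)H(G₂) + H(K₂)H(G₁)`. -/
theorem yamada_two_vertex_union (G₁ G₂ : Multigraph) (u₁ v₁ : G₁.V) (u₂ v₂ : G₂.V)
    (h₁ : u₁ ≠ v₁) (h₂ : u₂ ≠ v₂)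
    (A : ℂ) (hA : A ≠ 0) (σ : ℂ) (hσ : σ = A + 1 + A⁻¹) :
    σ * (Multigraph.glue G₁ G₂ u₁ v₁ u₂ v₂).yamada A =
      (G₁.identify u₁ v₁).yamada A * (G₂.identify u₂ v₂).yamada A +
        (σ + 1) * (G₁.yamada A * G₂.yamada A) +
        (G₁.identify u₁ v₁).yamada A * G₂.yamada A +
        (G₂.identify u₂ v₂).yamada A * G₁.yamada A := by
  classical
  have ht : (-A - 2 - A⁻¹ : ℂ) = -A - 2 - A⁻¹ := rfl
  have hσt : σ = -(-A - 2 - A⁻¹) - 1 := by rw [hσ]; ring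
  rw [Multigraph.yamada_glue h₁ h₂ ht,
    Multigraph.yamada_identify G₁ h₁ ht, Multigraph.yamada_identify G₂ h₂ ht,
    Multigraph.yamada_eq_aS_bS G₁ u₁ v₁ ht, Multigraph.yamada_eq_aS_bS G₂ u₂ v₂ ht, hσt]
  ring
end

section
/- Let Θ_s be the multigraph with two distinct vertices joined by s ≥ 1 parallel edges, with edges labelled by elements a_1, a_2, …, a_s of a commutative ring, and let w be a ring element. Then (1−w)·Ch(Θ_s) = Π_{i=1}^{s}(a_i − w) − w·Π_{i=1}^{s}(a_i − 1). -/
/-- The chain polynomial of a multigraph `G` with edge labels `ℓ` in a commutative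
ring, evaluated at `w`:
`Ch(G) = Σ_{Y ⊆ E} F_{G−Y}(1−w) · Π_{a∈Y} ℓ(a)`, where
`F_{G−Y}(t) = Σ_{S ⊆ E∖Y} (−1)^{|(E∖Y)∖S|} t^{β(S)}` is the flow polynomial of the
spanning subgraph `G − Y` evaluated at `t = 1 − w`. -/
noncomputable def Multigraph.chain {R : Type*} [CommRing R] (G : Multigraph)
    (ℓ : G.E → R) (w : R) : R :=
  ∑ Y : Finset G.E,
    (∑ S ∈ Yᶜ.powerset, (-1 : R) ^ (Yᶜ.card - S.card) * (1 - w) ^ G.betti S) *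
      ∏ a ∈ Y, ℓ a

/-- The `s`-theta-graph `Θ_s`: two distinct vertices joined by `s` parallel edges. -/
def Multigraph.theta (s : ℕ) : Multigraph where
  V := Bool
  E := Fin s
  ends := fun _ => s(false, true)

lemma theta_mu_empty (s : ℕ) : (Multigraph.theta s).mu ∅ = 2 := by
  have e : Quot (fun x y : (Multigraph.theta s).V =>
      ∃ e ∈ (∅ : Finset (Multigraph.theta s).E), (Multigraph.theta s).ends e = s(x, y)) ≃ Bool :=
    { toFun := Quot.lift (fun b => b) (fun x y h => by simp at h)
      invFun := Quot.mk _
      left_inv := by intro q; induction q using Quot.ind; rfl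
      right_inv := fun b => rfl }
  rw [Multigraph.mu, Nat.card_congr e]
  simp [Nat.card_eq_fintype_card]

lemma theta_mu_nonempty (s : ℕ) (S : Finset (Fin s)) (h : S.Nonempty) :
    (Multigraph.theta s).mu S = 1 := by
  obtain ⟨e, he⟩ := h
  set r := fun x y : (Multigraph.theta s).V =>
    ∃ e ∈ S, (Multigraph.theta s).ends e = s(x, y) with hr
  have hft : Quot.mk r false = Quot.mk r true := Quot.sound ⟨e, he, rfl⟩
  have hsub : Subsingleton (Quot r) := by
    constructor
    intro p q
    induction p using Quot.ind with | _ x =>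
    induction q using Quot.ind with | _ y =>
    cases x <;> cases y <;> simp [hft]
  have hne : Nonempty (Quot r) := ⟨Quot.mk r false⟩
  show Nat.card (Quot r) = 1
  rw [Nat.card_eq_one_iff_unique]
  exact ⟨hsub, hne⟩

lemma theta_card_V (s : ℕ) : Nat.card (Multigraph.theta s).V = 2 := by
  show Nat.card Bool = 2
  simp [Nat.card_eq_fintype_card]

lemma theta_betti_empty (s : ℕ) : (Multigraph.theta s).betti ∅ = 0 := by
  rw [Multigraph.betti, theta_mu_empty, theta_card_V]
  simp

lemma theta_betti_nonempty (s : ℕ) (S : Finset (Fin s)) (h : S.Nonempty) :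
    (Multigraph.theta s).betti S = S.card - 1 := by
  show S.card + (Multigraph.theta s).mu S - Nat.card (Multigraph.theta s).V = S.card - 1
  rw [theta_mu_nonempty s S h, theta_card_V]
  omega

/-- The flow polynomial of the graph with `T.card` parallel edges, times `(1 - w)`. -/
lemma theta_flow (s : ℕ) (T : Finset (Fin s)) (w : R') [CommRing R'] :
    (1 - w) * ∑ S ∈ T.powerset,
        (-1 : R') ^ (T.card - S.card) * (1 - w) ^ (Multigraph.theta s).betti S =
      (-w) ^ T.card - w * (-1) ^ T.card := by
  have key : ∑ S ∈ T.powerset,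
      ((1 - w) * ((-1 : R') ^ (T.card - S.card) * (1 - w) ^ (Multigraph.theta s).betti S)
        - (-1 : R') ^ (T.card - S.card) * (1 - w) ^ S.card)
      = (1 - w) * ((-1) ^ T.card * 1) - (-1) ^ T.card * 1 := by
    rw [Finset.sum_eq_single_of_mem (∅ : Finset (Fin s)) (Finset.empty_mem_powerset T)]
    · rw [show (Multigraph.theta s).betti (∅ : Finset (Fin s)) = 0 from theta_betti_empty s]
      simp
    · intro S _ hS
      have hne : S.Nonempty := Finset.nonempty_iff_ne_empty.mpr hS
      have h1 : 1 ≤ S.card := Finset.card_pos.mpr hne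
      have hp : (1 - w) * (1 - w) ^ (S.card - 1) = (1 - w) ^ S.card := by
        rw [← pow_succ']
        congr 1
        omega
      rw [theta_betti_nonempty s S hne, sub_eq_zero, mul_left_comm, hp]
  have binom : ∑ S ∈ T.powerset, (-1 : R') ^ (T.card - S.card) * (1 - w) ^ S.card
      = (-w) ^ T.card := by
    have h := Finset.prod_add (fun _ : Fin s => (1 - w)) (fun _ : Fin s => (-1 : R')) T
    simp only [Finset.prod_const] at h
    have h2 : ∑ S ∈ T.powerset, (-1 : R') ^ (T.card - S.card) * (1 - w) ^ S.card
        = ∑ S ∈ T.powerset, (1 - w) ^ S.card * (-1 : R') ^ (T \ S).card := by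
      refine Finset.sum_congr rfl fun S hS => ?_
      rw [Finset.card_sdiff_of_subset (Finset.mem_powerset.mp hS), mul_comm]
    rw [h2, ← h]
    congr 1
    ring
  rw [Finset.sum_sub_distrib, ← Finset.mul_sum, binom] at key
  have h3 := sub_eq_iff_eq_add.mp key
  rw [h3]
  ring

/-- For the theta graph `Θ_s` (`s ≥ 1`) with edges labelled
`a 0, …, a (s−1)` in a commutative ring and any ring element `w`,
`(1 − w)·Ch(Θ_s) = Π_i (a i − w) − w·Π_i (a i − 1)`. -/
theorem chain_theta {R : Type*} [CommRing R] (s : ℕ) (hs : 1 ≤ s)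
    (a : Fin s → R) (w : R) :
    (1 - w) * (Multigraph.theta s).chain a w =
      (∏ i, (a i - w)) - w * ∏ i, (a i - 1) := by
  have expand : ∀ c : R, (∏ i, (a i + c))
      = ∑ Y : Finset (Fin s), c ^ (Yᶜ.card) * ∏ i ∈ Y, a i := by
    intro c
    have := Finset.prod_add a (fun _ : Fin s => c) (Finset.univ : Finset (Fin s))
    rw [this, Finset.powerset_univ]
    refine Finset.sum_congr rfl fun Y _ => ?_
    rw [Finset.prod_const, mul_comm]
    rfl
  show (1 - w) * (∑ Y : Finset (Fin s), (∑ S ∈ Yᶜ.powerset, (-1 : R) ^ (Yᶜ.card - S.card) *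
    (1 - w) ^ (Multigraph.theta s).betti S) * ∏ i ∈ Y, a i) = _
  rw [Finset.mul_sum]
  have step : ∀ Y : Finset (Fin s),
      (1 - w) * ((∑ S ∈ Yᶜ.powerset,
          (-1 : R) ^ (Yᶜ.card - S.card) * (1 - w) ^ (Multigraph.theta s).betti S) *
        ∏ i ∈ Y, a i)
      = ((-w) ^ Yᶜ.card - w * (-1) ^ Yᶜ.card) * ∏ i ∈ Y, a i := by
    intro Y
    rw [← mul_assoc, theta_flow s Yᶜ w]
  calc (∑ Y : Finset (Fin s), (1 - w) *
        ((∑ S ∈ Yᶜ.powerset,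
            (-1 : R) ^ (Yᶜ.card - S.card) * (1 - w) ^ (Multigraph.theta s).betti S) *
          ∏ i ∈ Y, a i))
      = ∑ Y : Finset (Fin s), ((-w) ^ Yᶜ.card - w * (-1) ^ Yᶜ.card) * ∏ i ∈ Y, a i := by
        exact Finset.sum_congr rfl fun Y _ => step Y
    _ = (∑ Y : Finset (Fin s), (-w) ^ Yᶜ.card * ∏ i ∈ Y, a i)
        - w * ∑ Y : Finset (Fin s), (-1 : R) ^ Yᶜ.card * ∏ i ∈ Y, a i := by
        rw [Finset.mul_sum, ← Finset.sum_sub_distrib]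
        refine Finset.sum_congr rfl fun Y _ => ?_
        ring
    _ = (∏ i, (a i - w)) - w * ∏ i, (a i - 1) := by
        rw [← expand (-w), ← expand (-1)]
        congr 1 <;> [skip; congr 1] <;> exact Finset.prod_congr rfl fun i _ => by ring
end

section
/- Let R > 0 and let F₁, F₂, G be analytic functions on the disc {z ∈ ℂ : |z| < R} such that |G(0)| ≤ 1 and G is not constant. Then for each ε > 0 there exists s₀ < ∞ such that for all integers s ≥ s₀, the equation |1 + F₁(z)·G(z)^s| = |1 + F₂(z)·G(z)^s| has a solution z with |z| < ε. -/
open Complex Filter Metric Set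

lemma sokal_aux_ge (u H : ℂ) (h : ‖u‖ * ‖H‖ < H.re) :
    ‖1 + u‖ ≤ ‖1 + u + H‖ := by
  rw [Complex.norm_def, Complex.norm_def]
  apply Real.sqrt_le_sqrt
  conv_rhs => rw [Complex.normSq_add]
  have h1 : (((1:ℂ) + u) * (starRingEnd ℂ) H).re = H.re + (u * (starRingEnd ℂ) H).re := by
    simp [add_mul, Complex.add_re, Complex.conj_re]
  have h2 : |(u * (starRingEnd ℂ) H).re| ≤ ‖u‖ * ‖H‖ := by
    calc |(u * (starRingEnd ℂ) H).re| ≤ ‖u * (starRingEnd ℂ) H‖ :=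
          Complex.abs_re_le_norm _
      _ = ‖u‖ * ‖H‖ := by rw [norm_mul, Complex.norm_conj]
  have h3 : 0 ≤ Complex.normSq H := Complex.normSq_nonneg H
  have h4 := (abs_le.mp h2).1
  rw [h1]
  linarith

lemma sokal_aux_le (u H : ℂ) (h : ‖u‖ * ‖H‖ + Complex.normSq H / 2 < -H.re) :
    ‖1 + u + H‖ ≤ ‖1 + u‖ := by
  rw [Complex.norm_def, Complex.norm_def]
  apply Real.sqrt_le_sqrt
  conv_lhs => rw [Complex.normSq_add]
  have h1 : (((1:ℂ) + u) * (starRingEnd ℂ) H).re = H.re + (u * (starRingEnd ℂ) H).re := by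
    simp [add_mul, Complex.add_re, Complex.conj_re]
  have h2 : |(u * (starRingEnd ℂ) H).re| ≤ ‖u‖ * ‖H‖ := by
    calc |(u * (starRingEnd ℂ) H).re| ≤ ‖u * (starRingEnd ℂ) H‖ :=
          Complex.abs_re_le_norm _
      _ = ‖u‖ * ‖H‖ := by rw [norm_mul, Complex.norm_conj]
  have h4 := (abs_le.mp h2).2
  rw [h1]
  linarith

-- STATEMENT 16 (Sokal's lemma): Let `F₁`, `F₂`, `G` be analytic functions on the
-- disc `{z : |z| < R}` with `|G(0)| ≤ 1` and `G` not constant on the disc.  Then for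
-- each `ε > 0` there exists `s₀` such that for all integers `s ≥ s₀` the equation
-- `|1 + F₁(z)·G(z)^s| = |1 + F₂(z)·G(z)^s|` has a solution with `|z| < ε`. -/
set_option maxHeartbeats 1000000 in
open Complex Filter Metric Set Topology in
/-- Sokal's lemma: Let `F₁`, `F₂`, `G` be analytic functions on the
disc `{z : |z| < R}` with `|G(0)| ≤ 1` and `G` not constant on the disc.  Then for
each `ε > 0` there exists `s₀` such that for all integers `s ≥ s₀` the equation
`|1 + F₁(z)·G(z)^s| = |1 + F₂(z)·G(z)^s|` has a solution with `|z| < ε`. -/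
theorem sokal_lemma (R : ℝ) (hR : 0 < R) (F₁ F₂ G : ℂ → ℂ)
    (hF₁ : AnalyticOnNhd ℂ F₁ (Metric.ball 0 R))
    (hF₂ : AnalyticOnNhd ℂ F₂ (Metric.ball 0 R))
    (hG : AnalyticOnNhd ℂ G (Metric.ball 0 R))
    (hG0 : ‖G 0‖ ≤ 1)
    (hGnotconst : ¬ ∀ z ∈ Metric.ball (0 : ℂ) R, G z = G 0)
    (ε : ℝ) (hε : 0 < ε) :
    ∃ s₀ : ℕ, ∀ s : ℕ, s₀ ≤ s →
      ∃ z : ℂ, ‖z‖ < ε ∧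
        ‖1 + F₁ z * G z ^ s‖ = ‖1 + F₂ z * G z ^ s‖ := by
  set ε' : ℝ := min ε R with hε'def
  have hε'pos : 0 < ε' := lt_min hε hR
  have hsub : Metric.ball (0:ℂ) ε' ⊆ Metric.ball 0 R :=
    Metric.ball_subset_ball (min_le_right _ _)
  by_cases hcase : ∃ z ∈ Metric.ball (0:ℂ) ε', F₁ z = F₂ z
  · obtain ⟨z, hz, hzeq⟩ := hcase
    refine ⟨0, fun s _ => ⟨z, ?_, by rw [hzeq]⟩⟩
    have h1 := mem_ball_zero_iff.mp hz
    exact h1.trans_le (min_le_left ε R)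
  push_neg at hcase
  -- identity theorem / open mapping
  have hpre : IsPreconnected (Metric.ball (0:ℂ) R) := (convex_ball (0:ℂ) R).isPreconnected
  have keyOM : ∀ z₀ ∈ Metric.ball (0:ℂ) R, 𝓝 (G z₀) ≤ Filter.map G (𝓝 z₀) := by
    intro z₀ hz₀
    rcases (hG z₀ hz₀).eventually_constant_or_nhds_le_map_nhds with h | h
    · exfalso
      apply hGnotconst
      have heq : Set.EqOn G (fun _ => G z₀) (Metric.ball 0 R) :=
        hG.eqOn_of_preconnected_of_eventuallyEq analyticOnNhd_const hpre hz₀ h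
      intro z hz
      rw [heq hz, heq (Metric.mem_ball_self hR)]
    · exact h
  have imnhd : ∀ z₀ ∈ Metric.ball (0:ℂ) R, ∀ U ∈ 𝓝 z₀, G '' U ∈ 𝓝 (G z₀) := fun z₀ hz₀ U hU =>
    keyOM z₀ hz₀ (Filter.image_mem_map hU)
  -- find z₁ with 0 < |G z₁| < 1
  have h0R : (0:ℂ) ∈ Metric.ball (0:ℂ) R := Metric.mem_ball_self hR
  obtain ⟨r₀, hr₀pos, hr₀sub⟩ := Metric.mem_nhds_iff.mp
    (imnhd 0 h0R (Metric.ball 0 ε') (Metric.ball_mem_nhds 0 hε'pos))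
  obtain ⟨b₀, hb₀mem, hb₀pos, hb₀lt⟩ :
      ∃ b₀ ∈ Metric.ball (G 0) r₀, 0 < ‖b₀‖ ∧ ‖b₀‖ < 1 := by
    by_cases hG00 : G 0 = 0
    · refine ⟨((min r₀ 1 / 2 : ℝ) : ℂ), ?_, ?_, ?_⟩
      · rw [hG00, Metric.mem_ball, dist_zero_right, Complex.norm_real, Real.norm_eq_abs,
          abs_of_pos (by positivity)]
        have := min_le_left r₀ 1
        linarith
      · rw [Complex.norm_real, Real.norm_eq_abs, abs_of_pos (by positivity)]; positivity
      · rw [Complex.norm_real, Real.norm_eq_abs, abs_of_pos (by positivity)]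
        have := min_le_right r₀ 1
        linarith
    · have ha0 : 0 < ‖G 0‖ := by
        simpa [norm_pos_iff] using hG00
      set t : ℝ := min (r₀ / (2 * ‖G 0‖)) (1/2) with htdef
      have ht0 : 0 < t := lt_min (by positivity) (by norm_num)
      have ht1 : t ≤ 1/2 := min_le_right _ _
      refine ⟨((1 - t : ℝ) : ℂ) * G 0, ?_, ?_, ?_⟩
      · rw [Metric.mem_ball, dist_eq_norm]
        have h1 : ((1 - t : ℝ) : ℂ) * G 0 - G 0 = ((-t : ℝ) : ℂ) * G 0 := by
          push_cast; ring
        rw [h1, norm_mul, Complex.norm_real, Real.norm_eq_abs, abs_of_neg (by linarith)]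
        have h2 : t ≤ r₀ / (2 * ‖G 0‖) := min_le_left _ _
        rw [le_div_iff₀ (by positivity)] at h2
        linarith [mul_pos ht0 ha0]
      · rw [norm_mul, Complex.norm_real, Real.norm_eq_abs, abs_of_pos (by linarith)]
        exact mul_pos (by linarith) ha0
      · rw [norm_mul, Complex.norm_real, Real.norm_eq_abs, abs_of_pos (by linarith)]
        linarith [mul_pos ht0 ha0, hG0]
  obtain ⟨z₁, hz₁mem, hz₁G⟩ := hr₀sub hb₀mem
  have hz₁R : z₁ ∈ Metric.ball (0:ℂ) R := hsub hz₁mem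
  set c : ℂ := F₁ z₁ - F₂ z₁ with hcdef
  have hc : c ≠ 0 := sub_ne_zero.mpr (hcase z₁ hz₁mem)
  have hcabs : 0 < ‖c‖ := norm_pos_iff.mpr hc
  set q : ℝ := (‖b₀‖ + 1) / 2 with hqdef
  have hq0 : 0 < q := by positivity
  have hq1 : q < 1 := by rw [hqdef]; linarith
  have hbq : ‖b₀‖ < q := by rw [hqdef]; linarith
  set M : ℝ := ‖F₂ z₁‖ + 1 with hMdef
  have hM : 0 < M := by positivity
  -- choose ρ
  have hGc : ContinuousAt G z₁ := (hG z₁ hz₁R).continuousAt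
  have hF₁c : ContinuousAt F₁ z₁ := (hF₁ z₁ hz₁R).continuousAt
  have hF₂c : ContinuousAt F₂ z₁ := (hF₂ z₁ hz₁R).continuousAt
  have ev1 : ∀ᶠ z in 𝓝 z₁, ‖G z‖ < q := by
    have h1 : Filter.Tendsto (fun z => ‖G z‖) (𝓝 z₁) (𝓝 (‖G z₁‖)) :=
      continuous_norm.continuousAt.comp hGc
    rw [hz₁G] at h1
    exact h1.eventually_lt_const hbq
  have ev2 : ∀ᶠ z in 𝓝 z₁, ‖F₁ z - F₂ z - c‖ < ‖c‖ / 2 := by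
    have h1 : Filter.Tendsto (fun z => ‖F₁ z - F₂ z - c‖) (𝓝 z₁)
        (𝓝 (‖F₁ z₁ - F₂ z₁ - c‖)) :=
      continuous_norm.continuousAt.comp ((hF₁c.sub hF₂c).sub continuousAt_const)
    have h2 : F₁ z₁ - F₂ z₁ - c = 0 := by rw [hcdef]; ring
    rw [h2, norm_zero] at h1
    exact h1.eventually_lt_const (by positivity)
  have ev3 : ∀ᶠ z in 𝓝 z₁, ‖F₂ z‖ < M := by
    have h1 : Filter.Tendsto (fun z => ‖F₂ z‖) (𝓝 z₁) (𝓝 (‖F₂ z₁‖)) :=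
      continuous_norm.continuousAt.comp hF₂c
    exact h1.eventually_lt_const (by rw [hMdef]; linarith)
  have ev4 : ∀ᶠ z in 𝓝 z₁, z ∈ Metric.ball (0:ℂ) ε' :=
    Metric.isOpen_ball.eventually_mem hz₁mem
  obtain ⟨ρ, hρpos, hρ⟩ := Metric.eventually_nhds_iff.mp ((ev1.and ev2).and (ev3.and ev4))
  have hW : ∀ y ∈ Metric.ball z₁ ρ,
      ‖G y‖ < q ∧ ‖F₁ y - F₂ y - c‖ < ‖c‖ / 2 ∧
      ‖F₂ y‖ < M ∧ y ∈ Metric.ball (0:ℂ) ε' := by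
    intro y hy
    have := hρ (Metric.mem_ball.mp hy)
    exact ⟨this.1.1, this.1.2, this.2.1, this.2.2⟩
  -- open mapping at z₁
  have himg : G '' Metric.ball z₁ ρ ∈ 𝓝 b₀ := by
    have := imnhd z₁ hz₁R (Metric.ball z₁ ρ) (Metric.ball_mem_nhds _ hρpos)
    rwa [hz₁G] at this
  obtain ⟨r, hrpos, hrsub⟩ := Metric.mem_nhds_iff.mp himg
  set θ₀ : ℝ := min 1 (r / (4 * ‖b₀‖)) with hθ₀def
  have hθ₀pos : 0 < θ₀ := lt_min one_pos (by positivity)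
  -- choose s₀
  obtain ⟨N₁, hN₁⟩ := exists_nat_gt (2 * Real.pi / θ₀)
  set C : ℝ := 3 * M + 3 * ‖c‖ with hCdef
  have hC : 0 < C := by positivity
  have htend : Filter.Tendsto (fun s : ℕ => q ^ s) Filter.atTop (𝓝 0) :=
    tendsto_pow_atTop_nhds_zero_of_lt_one hq0.le hq1
  obtain ⟨N₂, hN₂⟩ := Filter.eventually_atTop.mp (htend.eventually_lt_const (by positivity :
    (0:ℝ) < 1 / C))
  refine ⟨max (max N₁ N₂) 1, fun s hs => ?_⟩
  have hs1 : 1 ≤ s := le_trans (le_max_right _ _) hs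
  have hsN₁ : N₁ ≤ s := le_trans (le_trans (le_max_left _ _) (le_max_left _ _)) hs
  have hsN₂ : N₂ ≤ s := le_trans (le_trans (le_max_right _ _) (le_max_left _ _)) hs
  have hqsC : q ^ s * C < 1 := by
    have := hN₂ s hsN₂
    rw [lt_div_iff₀ hC] at this
    exact this
  have hspos : (0:ℝ) < (s:ℝ) := by exact_mod_cast hs1
  have hsθ : 2 * Real.pi / (s:ℝ) < θ₀ := by
    have h1 : 2 * Real.pi / θ₀ < (s:ℝ) := hN₁.trans_le (by exact_mod_cast hsN₁)
    rw [div_lt_iff₀ hθ₀pos] at h1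
    rw [div_lt_iff₀ hspos]
    linarith only [h1]
  have hb₀ne : b₀ ≠ 0 := by
    intro h; rw [h, norm_zero] at hb₀pos; exact lt_irrefl 0 hb₀pos
  set w : ℂ := b₀ ^ s * c with hwdef
  have hw : w ≠ 0 := mul_ne_zero (pow_ne_zero _ hb₀ne) hc
  set φ : ℝ := Complex.arg w with hφdef
  have hφle : |φ| ≤ Real.pi := Complex.abs_arg_le_pi w
  have hπ : 0 < Real.pi := Real.pi_pos
  have habs_div : ∀ x : ℝ, |x| ≤ 2 * Real.pi → |x / (s:ℝ)| ≤ θ₀ := by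
    intro x hx
    rw [abs_div, abs_of_pos hspos]
    refine le_trans ?_ hsθ.le
    exact (div_le_div_iff_of_pos_right hspos).mpr hx
  -- membership of rotated points
  have hmem : ∀ θ : ℝ, |θ| ≤ θ₀ → b₀ * Complex.exp ((θ:ℂ) * Complex.I) ∈ Metric.ball b₀ r := by
    intro θ hθ
    rw [Metric.mem_ball, dist_eq_norm]
    have h1 : b₀ * Complex.exp ((θ:ℂ) * Complex.I) - b₀
        = b₀ * (Complex.exp ((θ:ℂ) * Complex.I) - 1) := by ring
    rw [h1, norm_mul]
    have habsθI : ‖(θ:ℂ) * Complex.I‖ = |θ| := by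
      rw [norm_mul, Complex.norm_I, Complex.norm_real, Real.norm_eq_abs, mul_one]
    have hθ1 : |θ| ≤ 1 := hθ.trans (min_le_left _ _)
    have h2 : ‖Complex.exp ((θ:ℂ) * Complex.I) - 1‖ ≤ 2 * |θ| := by
      have := Complex.norm_exp_sub_one_le (x := (θ:ℂ) * Complex.I) (by rw [habsθI]; exact hθ1)
      rwa [habsθI] at this
    have hθ2 : |θ| ≤ r / (4 * ‖b₀‖) := hθ.trans (min_le_right _ _)
    have h3 : ‖b₀‖ * ‖Complex.exp ((θ:ℂ) * Complex.I) - 1‖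
        ≤ ‖b₀‖ * (2 * |θ|) :=
      mul_le_mul_of_nonneg_left h2 (norm_nonneg _)
    have h4 : ‖b₀‖ * (2 * |θ|) ≤ r / 2 := by
      rw [le_div_iff₀ (by positivity : (0:ℝ) < 4 * ‖b₀‖)] at hθ2
      linarith only [hθ2]
    linarith only [h3, h4, hrpos]
  -- exponent algebra
  have hexp : ∀ θ : ℝ, Complex.exp ((θ:ℂ) * Complex.I) ^ s
      = Complex.exp ((((s:ℝ) * θ : ℝ) : ℂ) * Complex.I) := by
    intro θ
    rw [← Complex.exp_nat_mul]
    congr 1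
    push_cast
    ring
  have hpow : ∀ θ : ℝ, (b₀ * Complex.exp ((θ:ℂ) * Complex.I)) ^ s * c
      = w * Complex.exp ((((s:ℝ) * θ : ℝ) : ℂ) * Complex.I) := by
    intro θ
    rw [mul_pow, hexp θ, hwdef]
    ring
  set P : ℝ := ‖w‖ with hPdef
  have hP : 0 < P := norm_pos_iff.mpr hw
  have hPeq : P = ‖b₀‖ ^ s * ‖c‖ := by
    rw [hPdef, hwdef, norm_mul, norm_pow]
  have hPle : P ≤ ‖c‖ * q ^ s := by
    rw [hPeq, mul_comm (‖c‖)]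
    exact mul_le_mul_of_nonneg_right (pow_le_pow_left₀ (norm_nonneg b₀) hbq.le s)
      (norm_nonneg c)
  set θp : ℝ := -φ / (s:ℝ) with hθpdef
  set θm : ℝ := (Real.pi - φ) / (s:ℝ) with hθmdef
  have hθple : |θp| ≤ θ₀ := habs_div _ (by rw [abs_neg]; linarith only [hφle, hπ])
  have hθmle : |θm| ≤ θ₀ := habs_div _ (by
    rw [abs_sub_comm]
    have := abs_le.mp hφle
    rw [abs_le]; constructor <;> linarith only [this.1, this.2, hπ])
  obtain ⟨zp, hzpmem, hzpG⟩ := hrsub (hmem θp hθple)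
  obtain ⟨zm, hzmmem, hzmG⟩ := hrsub (hmem θm hθmle)
  have hsθp : (s:ℝ) * θp = -φ := by
    rw [hθpdef]; field_simp
  have hsθm : (s:ℝ) * θm = Real.pi - φ := by
    rw [hθmdef]; field_simp
  have hkey_p : (b₀ * Complex.exp ((θp:ℂ) * Complex.I)) ^ s * c = (P : ℂ) := by
    rw [hpow θp, hsθp]
    conv_lhs => rw [← Complex.norm_mul_exp_arg_mul_I w]
    rw [mul_assoc, ← Complex.exp_add]
    have h1 : (Complex.arg w : ℂ) * Complex.I + ((-φ : ℝ) : ℂ) * Complex.I = 0 := by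
      rw [hφdef]; push_cast; ring
    rw [h1, Complex.exp_zero, mul_one, hPdef]
  have hkey_m : (b₀ * Complex.exp ((θm:ℂ) * Complex.I)) ^ s * c = -(P : ℂ) := by
    rw [hpow θm, hsθm]
    conv_lhs => rw [← Complex.norm_mul_exp_arg_mul_I w]
    rw [mul_assoc, ← Complex.exp_add]
    have h1 : (Complex.arg w : ℂ) * Complex.I + ((Real.pi - φ : ℝ) : ℂ) * Complex.I
        = (Real.pi : ℂ) * Complex.I := by
      rw [hφdef]; push_cast; ring
    rw [h1, Complex.exp_pi_mul_I, hPdef]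
    ring
  have habs_rot : ∀ θ : ℝ, ‖b₀ * Complex.exp ((θ:ℂ) * Complex.I)‖
      = ‖b₀‖ := by
    intro θ
    rw [norm_mul, Complex.norm_exp_ofReal_mul_I, mul_one]
  -- main estimates at a rotated point
  have hq3M : q ^ s * (3 * M) < 1 := by
    have h1 : q ^ s * (3 * M) ≤ q ^ s * C :=
      mul_le_mul_of_nonneg_left (by rw [hCdef]; linarith only [hcabs]) (pow_nonneg hq0.le s)
    linarith only [h1, hqsC]
  have main : ∀ z : ℂ, z ∈ Metric.ball z₁ ρ → ∀ σ : ℂ,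
      G z ^ s * c = σ → ‖σ‖ = P →
      ‖F₂ z * G z ^ s‖ ≤ M * q ^ s ∧
      ‖(F₁ z - F₂ z) * G z ^ s - σ‖ ≤ P / 2 ∧
      ‖(F₁ z - F₂ z) * G z ^ s‖ ≤ 3 * P / 2 := by
    intro z hz σ hσ hσabs
    obtain ⟨hWG, hWd, hWF₂, _⟩ := hW z hz
    have hGq : ‖G z‖ ^ s ≤ q ^ s := pow_le_pow_left₀ (norm_nonneg _) hWG.le s
    have hGsP : ‖G z ^ s‖ = P / ‖c‖ := by
      have h1 : ‖G z ^ s‖ * ‖c‖ = P := by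
        rw [← norm_mul, hσ, hσabs]
      field_simp at h1 ⊢
      linarith only [h1]
    constructor
    · rw [norm_mul, norm_pow]
      exact mul_le_mul hWF₂.le hGq (by positivity) hM.le
    constructor
    · have h1 : (F₁ z - F₂ z) * G z ^ s - σ = (F₁ z - F₂ z - c) * G z ^ s := by
        rw [← hσ]; ring
      rw [h1, norm_mul, hGsP]
      calc ‖F₁ z - F₂ z - c‖ * (P / ‖c‖)
          ≤ (‖c‖ / 2) * (P / ‖c‖) := by
            apply mul_le_mul_of_nonneg_right hWd.le (by positivity)
        _ = P / 2 := by field_simp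
    · have h1 : ‖F₁ z - F₂ z‖ ≤ 3 * ‖c‖ / 2 := by
        have h2 : ‖F₁ z - F₂ z‖ ≤ ‖F₁ z - F₂ z - c‖ + ‖c‖ := by
          calc ‖F₁ z - F₂ z‖ = ‖(F₁ z - F₂ z - c) + c‖ := by ring_nf
            _ ≤ _ := norm_add_le _ _
        linarith only [h2, hWd]
      rw [norm_mul, hGsP]
      calc ‖F₁ z - F₂ z‖ * (P / ‖c‖)
          ≤ (3 * ‖c‖ / 2) * (P / ‖c‖) :=
            mul_le_mul_of_nonneg_right h1 (by positivity)
        _ = 3 * P / 2 := by field_simp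
  -- the two inequalities
  have hplus : ‖1 + F₂ zp * G zp ^ s‖ ≤ ‖1 + F₁ zp * G zp ^ s‖ := by
    have hσ : G zp ^ s * c = (P : ℂ) := by rw [hzpG]; exact hkey_p
    obtain ⟨hu, hd, hH⟩ := main zp hzpmem (P : ℂ) hσ (by
      rw [Complex.norm_real, Real.norm_eq_abs, abs_of_pos hP])
    set u : ℂ := F₂ zp * G zp ^ s with hudef
    set H : ℂ := (F₁ zp - F₂ zp) * G zp ^ s with hHdef
    have heq1 : 1 + F₁ zp * G zp ^ s = 1 + u + H := by rw [hudef, hHdef]; ring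
    rw [heq1]
    apply sokal_aux_ge
    have hHre : P / 2 ≤ H.re := by
      have h1 : (H - (P:ℂ)).re = H.re - P := by simp
      have h3 : -(P/2) ≤ (H - (P:ℂ)).re :=
        le_trans (neg_le_neg hd) ((neg_le_neg (Complex.abs_re_le_norm _)).trans
          (neg_abs_le _))
      linarith only [h1, h3]
    calc ‖u‖ * ‖H‖ ≤ (M * q ^ s) * (3 * P / 2) := by
          apply mul_le_mul hu hH (norm_nonneg _) (by positivity)
      _ < P / 2 := by
          linarith only [mul_lt_mul_of_pos_right hq3M (show (0:ℝ) < P / 2 by positivity)]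
      _ ≤ H.re := hHre
  have hminus : ‖1 + F₁ zm * G zm ^ s‖ ≤ ‖1 + F₂ zm * G zm ^ s‖ := by
    have hσ : G zm ^ s * c = -(P : ℂ) := by rw [hzmG]; exact hkey_m
    obtain ⟨hu, hd, hH⟩ := main zm hzmmem (-(P : ℂ)) hσ (by
      rw [norm_neg, Complex.norm_real, Real.norm_eq_abs, abs_of_pos hP])
    set u : ℂ := F₂ zm * G zm ^ s with hudef
    set H : ℂ := (F₁ zm - F₂ zm) * G zm ^ s with hHdef
    have heq1 : 1 + F₁ zm * G zm ^ s = 1 + u + H := by rw [hudef, hHdef]; ring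
    rw [heq1]
    apply sokal_aux_le
    have hHre : H.re ≤ -(P / 2) := by
      have h1 : (H - -(P:ℂ)).re = H.re + P := by simp
      have h2 := (Complex.re_le_norm (H - -(P:ℂ))).trans hd
      linarith only [h1, h2]
    have hnormSq : Complex.normSq H ≤ (3 * P / 2) ^ 2 := by
      rw [Complex.normSq_eq_norm_sq]
      exact pow_le_pow_left₀ (norm_nonneg _) hH 2
    have hfinal : (M * q ^ s) * (3 * P / 2) + (3 * P / 2) ^ 2 / 2 < P / 2 := by
      have hQ : 0 ≤ q ^ s := pow_nonneg hq0.le s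
      have e1 : P * P ≤ (‖c‖ * q ^ s) * P := mul_le_mul_of_nonneg_right hPle hP.le
      have e3 : q ^ s * (3 * M + 9/4 * ‖c‖) < 1 :=
        lt_of_le_of_lt (mul_le_mul_of_nonneg_left (by rw [hCdef]; linarith only [hcabs]) hQ) hqsC
      have e4 : (P/2) * (q ^ s * (3 * M + 9/4 * ‖c‖)) < (P/2) * 1 :=
        mul_lt_mul_of_pos_left e3 (by positivity)
      linarith only [e1, e4]
    calc ‖u‖ * ‖H‖ + Complex.normSq H / 2
        ≤ (M * q ^ s) * (3 * P / 2) + (3 * P / 2) ^ 2 / 2 := by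
          have := mul_le_mul hu hH (norm_nonneg _) (by positivity)
          linarith only [this, hnormSq]
      _ < P / 2 := hfinal
      _ ≤ -H.re := by linarith only [hHre]
  -- intermediate value theorem
  have hsubρ : Metric.ball z₁ ρ ⊆ Metric.ball (0:ℂ) R := fun y hy => hsub (hW y hy).2.2.2
  have hfcont : ContinuousOn (fun z => ‖1 + F₁ z * G z ^ s‖) (Metric.ball z₁ ρ) :=
    continuous_norm.comp_continuousOn (continuousOn_const.add
      ((hF₁.continuousOn.mono hsubρ).mul ((hG.continuousOn.mono hsubρ).pow s)))
  have hgcont : ContinuousOn (fun z => ‖1 + F₂ z * G z ^ s‖) (Metric.ball z₁ ρ) :=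
    continuous_norm.comp_continuousOn (continuousOn_const.add
      ((hF₂.continuousOn.mono hsubρ).mul ((hG.continuousOn.mono hsubρ).pow s)))
  obtain ⟨z, hzmem, hzeq⟩ := (convex_ball z₁ ρ).isPreconnected.intermediate_value₂
    hzmmem hzpmem hfcont hgcont hminus hplus
  refine ⟨z, ?_, hzeq⟩
  have h1 := mem_ball_zero_iff.mp (hW z hzmem).2.2.2
  exact h1.trans_le (min_le_left ε R)
end

section
/- For every complex number A₀ ≠ 0 with |A₀ + 1 + A₀^{−1}| ≥ 1 and every ε > 0, there exists s₀ < ∞ such that for every integer s ≥ s₀ there exists a complex number A ≠ 0 with |A − A₀| < ε, σ ≠ 0 (where σ = A + 1 + A^{−1}), satisfying |1 + σ·(−σ)^{−s}| = |1 − (−σ)^{−s}|. -/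
open Complex Filter Real

lemma h_formula (w₀ : ℂ) (s : ℕ) (t : ℝ) :
    Complex.normSq ((w₀ * Complex.exp (t * Complex.I)) ^ s - w₀ * Complex.exp (t * Complex.I))
      - Complex.normSq ((w₀ * Complex.exp (t * Complex.I)) ^ s - 1)
    = Complex.normSq w₀ - 1
      + 2 * ((w₀ ^ s * Complex.exp ((s * t : ℝ) * Complex.I)) * (1 - (starRingEnd ℂ) w₀)
          + w₀ ^ s * Complex.exp ((s * t : ℝ) * Complex.I) * (starRingEnd ℂ) w₀
            * (1 - Complex.exp (-(t * Complex.I)))).re := by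
  set W := w₀ * Complex.exp (t * Complex.I) with hWdef
  have hWs : W ^ s = w₀ ^ s * Complex.exp ((s * t : ℝ) * Complex.I) := by
    rw [hWdef, mul_pow, ← Complex.exp_nat_mul]
    congr 1
    push_cast
    ring
  have hconjW : (starRingEnd ℂ) W = (starRingEnd ℂ) w₀ * Complex.exp (-(t * Complex.I)) := by
    rw [hWdef, map_mul, ← Complex.exp_conj]
    congr 1
    simp [Complex.conj_ofReal]
  have hnsW : Complex.normSq W = Complex.normSq w₀ := by
    rw [hWdef, Complex.normSq_mul, Complex.normSq_eq_norm_sq (Complex.exp _), Complex.norm_exp]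
    simp
  have hid : W ^ s * 1 - W ^ s * (starRingEnd ℂ) W
      = (w₀ ^ s * Complex.exp ((s * t : ℝ) * Complex.I)) * (1 - (starRingEnd ℂ) w₀)
          + w₀ ^ s * Complex.exp ((s * t : ℝ) * Complex.I) * (starRingEnd ℂ) w₀
            * (1 - Complex.exp (-(t * Complex.I))) := by
    rw [hWs, hconjW]; ring
  rw [Complex.normSq_sub, Complex.normSq_sub, ← hid]
  simp only [Complex.normSq_one, map_one, mul_one, Complex.sub_re]
  rw [hnsW]
  ring

lemma exists_root_near (A₀ : ℂ) (hA₀ : A₀ ≠ 0) (σ : ℂ) :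
    ∃ A : ℂ, A ≠ 0 ∧ A + 1 + A⁻¹ = σ ∧
      ‖A - A₀‖ ^ 2 ≤ ‖A₀‖ * ‖σ - (A₀ + 1 + A₀⁻¹)‖ := by
  obtain ⟨d, hd⟩ := IsAlgClosed.exists_pow_nat_eq ((σ - 1)^2 - 4) (n := 2) (by norm_num)
  set α := (σ - 1 + d)/2 with hαdef
  set β := (σ - 1 - d)/2 with hβdef
  have hprod : α * β = 1 := by
    rw [hαdef, hβdef]
    field_simp
    linear_combination -hd
  have hα0 : α ≠ 0 := left_ne_zero_of_mul_eq_one hprod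
  have hβ0 : β ≠ 0 := right_ne_zero_of_mul_eq_one hprod
  have hsum : α + β = σ - 1 := by rw [hαdef, hβdef]; ring
  have hαinv : α⁻¹ = β := by
    field_simp
    linear_combination hprod + hd / 2
  have hβinv : β⁻¹ = α := by
    field_simp
    linear_combination hprod + hd / 2
  have hkey : (A₀ - α) * (A₀ - β) = A₀ * ((A₀ + 1 + A₀⁻¹) - σ) := by
    have h1 : A₀ * A₀⁻¹ = 1 := mul_inv_cancel₀ hA₀
    calc (A₀ - α) * (A₀ - β) = A₀^2 - (α + β) * A₀ + α * β := by ring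
    _ = A₀^2 - (σ - 1) * A₀ + 1 := by rw [hsum, hprod]
    _ = A₀ * ((A₀ + 1 + A₀⁻¹) - σ) := by
        field_simp
        ring
  have habs : ‖A₀ - α‖ * ‖A₀ - β‖
      = ‖A₀‖ * ‖σ - (A₀ + 1 + A₀⁻¹)‖ := by
    rw [← norm_mul, hkey, norm_mul, ← norm_neg ((A₀ + 1 + A₀⁻¹) - σ)]
    ring_nf
  rcases le_total (‖A₀ - α‖) (‖A₀ - β‖) with h | h
  · refine ⟨α, hα0, ?_, ?_⟩
    · rw [hαinv]; linear_combination hsum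
    · rw [← habs, ← norm_neg (α - A₀)]
      have : -(α - A₀) = A₀ - α := by ring
      rw [this, sq]
      exact mul_le_mul_of_nonneg_left h (norm_nonneg _)
  · refine ⟨β, hβ0, ?_, ?_⟩
    · rw [hβinv]; linear_combination hsum
    · rw [← habs, ← norm_neg (β - A₀)]
      have : -(β - A₀) = A₀ - β := by ring
      rw [this, sq]
      exact mul_le_mul_of_nonneg_right h (norm_nonneg _)

set_option maxHeartbeats 1000000 in
/-- For every `A₀ ≠ 0` with `|A₀ + 1 + A₀⁻¹| ≥ 1` and every `ε > 0`
there exists `s₀` such that for every integer `s ≥ s₀` there is `A ≠ 0` with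
`|A − A₀| < ε`, `σ = A + 1 + A⁻¹ ≠ 0`, and `|1 + σ·(−σ)⁻ˢ| = |1 − (−σ)⁻ˢ|`. -/
theorem limit_zeros_ring_of_beads (A₀ : ℂ) (hA₀ : A₀ ≠ 0)
    (hreg : 1 ≤ ‖A₀ + 1 + A₀⁻¹‖) (ε : ℝ) (hε : 0 < ε) :
    ∃ s₀ : ℕ, ∀ s : ℕ, s₀ ≤ s →
      ∃ A : ℂ, A ≠ 0 ∧ ‖A - A₀‖ < ε ∧ A + 1 + A⁻¹ ≠ 0 ∧
        ‖1 + (A + 1 + A⁻¹) * (-(A + 1 + A⁻¹)) ^ (-(s : ℤ))‖ =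
          ‖1 - (-(A + 1 + A⁻¹)) ^ (-(s : ℤ))‖ := by
  by_cases hA₀1 : A₀ = -1
  · refine ⟨0, fun s _ => ⟨-1, by norm_num, ?_, by norm_num, ?_⟩⟩
    · simp [hA₀1, hε]
    · norm_num
  -- main case
  set σ₀ : ℂ := A₀ + 1 + A₀⁻¹ with hσ₀def
  set r₀ : ℝ := ‖σ₀‖ with hr₀def
  have hσ₀ne : σ₀ ≠ -1 := by
    intro h
    apply hA₀1
    have h2 : (A₀ + 1)^2 = 0 := by
      have := h
      rw [hσ₀def] at this
      field_simp at this
      linear_combination this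
    have := pow_eq_zero_iff (n := 2) (by norm_num) |>.1 h2
    linear_combination this
  set w₀ : ℂ := -σ₀ with hw₀def
  set c : ℝ := ‖1 - (starRingEnd ℂ) w₀‖ with hcdef
  have hσ₀0 : σ₀ ≠ 0 := by
    intro h
    rw [hr₀def, h] at hreg
    simp at hreg
    linarith
  have hc : 0 < c := by
    rw [hcdef]
    apply norm_pos_iff.2
    intro h
    apply hσ₀ne
    have h1 : (starRingEnd ℂ) w₀ = 1 := by
      have := sub_eq_zero.1 h
      exact this.symm
    have h2 : w₀ = 1 := by
      have := congrArg (starRingEnd ℂ) h1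
      simpa using this
    rw [hw₀def] at h2
    linear_combination -h2
  have hr₀1 : 1 ≤ r₀ := hreg
  have hr₀pos : 0 < r₀ := lt_of_lt_of_le one_pos hr₀1
  -- eventually conditions
  have h1 : ∀ᶠ s : ℕ in atTop, 13 ≤ s := eventually_ge_atTop 13
  have h2 : ∀ᶠ s : ℕ in atTop, 16 * π * r₀ ≤ c * s := by
    filter_upwards [eventually_ge_atTop ⌈16 * π * r₀ / c⌉₊] with s hs
    have : 16 * π * r₀ / c ≤ (s : ℝ) := le_trans (Nat.le_ceil _) (Nat.cast_le.2 hs)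
    rw [div_le_iff₀ hc] at this
    linarith
  have h3 : ∀ᶠ s : ℕ in atTop, r₀ ^ 2 - 1 < c * r₀ ^ s := by
    rcases eq_or_lt_of_le hr₀1 with heq | hlt
    · apply Filter.Eventually.of_forall
      intro s
      rw [← heq]
      simp
      linarith
    · have ht : Filter.Tendsto (fun s : ℕ => r₀ ^ s) atTop atTop :=
        tendsto_pow_atTop_atTop_of_one_lt hlt
      filter_upwards [ht.eventually_gt_atTop ((r₀ ^ 2 - 1) / c)] with s hs
      rw [div_lt_iff₀ hc] at hs
      linarith
  have h4 : ∀ᶠ s : ℕ in atTop, 8 * π * ‖A₀‖ * r₀ < ε ^ 2 * s := by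
    filter_upwards [eventually_gt_atTop ⌈8 * π * ‖A₀‖ * r₀ / ε ^ 2⌉₊] with s hs
    have h5 : 8 * π * ‖A₀‖ * r₀ / ε ^ 2 < (s : ℝ) := by
      calc 8 * π * ‖A₀‖ * r₀ / ε ^ 2 ≤ (⌈8 * π * ‖A₀‖ * r₀ / ε ^ 2⌉₊ : ℝ) :=
            Nat.le_ceil _
      _ < s := by exact_mod_cast Nat.cast_lt.2 hs
    rw [div_lt_iff₀ (by positivity)] at h5
    linarith
  obtain ⟨s₀, hs₀⟩ := Filter.eventually_atTop.1 (((h1.and h2).and (h3.and h4)))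
  refine ⟨s₀, fun s hs => ?_⟩
  obtain ⟨⟨hs13, hsc⟩, hE3, hE4⟩ := hs₀ s hs
  have hspos : (0 : ℝ) < s := by
    have : (13 : ℝ) ≤ s := by exact_mod_cast hs13
    linarith
  -- the vector v and angle θ
  set v : ℂ := w₀ ^ s * (1 - (starRingEnd ℂ) w₀) with hvdef
  have habsv : ‖v‖ = r₀ ^ s * c := by
    rw [hvdef, norm_mul, norm_pow]
    congr 2
    rw [hw₀def, norm_neg, hr₀def]
  set θ : ℝ := Complex.arg v with hθdef
  have hθ1 : -π < θ := Complex.neg_pi_lt_arg v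
  have hθ2 : θ ≤ π := Complex.arg_le_pi v
  have hπ : 0 < π := Real.pi_pos
  set ta : ℝ := (2 * π - θ) / s with htadef
  set tb : ℝ := ta + π / s with htbdef
  have htapos : 0 < ta := div_pos (by linarith) hspos
  have htalt : ta ≤ tb := by
    rw [htbdef]
    have : 0 < π / (s : ℝ) := div_pos hπ hspos
    linarith
  have htble : tb ≤ 4 * π / s := by
    rw [htbdef, htadef, ← add_div, div_le_div_iff₀ hspos hspos]
    ring_nf
    nlinarith [hspos]
  have h4πs : 4 * π / s ≤ 1 := by
    rw [div_le_one hspos]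
    have h13 : (13 : ℝ) ≤ s := by exact_mod_cast hs13
    nlinarith [Real.pi_lt_d2]
  have hrs_pos : 0 < r₀ ^ s := pow_pos hr₀pos s
  -- error bound
  have key : ∀ t : ℝ, 0 ≤ t → t ≤ 4 * π / s →
      |(w₀ ^ s * Complex.exp (((s : ℝ) * t : ℝ) * Complex.I) * (starRingEnd ℂ) w₀
          * (1 - Complex.exp (-((t : ℝ) * Complex.I)))).re| ≤ r₀ ^ s * (c / 2) := by
    intro t ht0 ht1
    have ht1' : t ≤ 1 := le_trans ht1 h4πs
    have habsti : ‖-((t : ℝ) * Complex.I)‖ = t := by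
      rw [norm_neg, norm_mul, Complex.norm_I, mul_one, Complex.norm_real,
        Real.norm_of_nonneg ht0]
    have hexp1 : ‖Complex.exp (((s : ℝ) * t : ℝ) * Complex.I)‖ = 1 := by
      rw [Complex.norm_exp]
      simp
    have hbd : ‖1 - Complex.exp (-((t : ℝ) * Complex.I))‖ ≤ 2 * t := by
      rw [← norm_neg, neg_sub]
      calc ‖Complex.exp (-((t : ℝ) * Complex.I)) - 1‖
          ≤ 2 * ‖-((t : ℝ) * Complex.I)‖ :=
            Complex.norm_exp_sub_one_le (by rw [habsti]; exact ht1')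
      _ = 2 * t := by rw [habsti]
    calc |(w₀ ^ s * Complex.exp (((s : ℝ) * t : ℝ) * Complex.I) * (starRingEnd ℂ) w₀
          * (1 - Complex.exp (-((t : ℝ) * Complex.I)))).re|
        ≤ ‖w₀ ^ s * Complex.exp (((s : ℝ) * t : ℝ) * Complex.I) * (starRingEnd ℂ) w₀
          * (1 - Complex.exp (-((t : ℝ) * Complex.I)))‖ := Complex.abs_re_le_norm _
      _ = r₀ ^ s * 1 * r₀ * ‖1 - Complex.exp (-((t : ℝ) * Complex.I))‖ := by
          rw [norm_mul, norm_mul, norm_mul, norm_pow, hexp1, Complex.norm_conj]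
          rw [hw₀def, norm_neg, hr₀def]
      _ ≤ r₀ ^ s * 1 * r₀ * (2 * t) := by
          apply mul_le_mul_of_nonneg_left hbd
          positivity
      _ ≤ r₀ ^ s * (c / 2) := by
          rw [mul_one]
          have h8 : r₀ * (2 * t) ≤ c / 2 := by
            have h9 : r₀ * (2 * t) ≤ r₀ * (2 * (4 * π / s)) := by
              apply mul_le_mul_of_nonneg_left _ hr₀pos.le
              linarith
            have h10 : r₀ * (2 * (4 * π / s)) ≤ c / 2 := by
              have heq : r₀ * (2 * (4 * π / s)) = 8 * π * r₀ / s := by ring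
              rw [heq, div_le_div_iff₀ hspos (by norm_num : (0:ℝ) < 2)]
              nlinarith [hsc]
            linarith
          calc r₀ ^ s * r₀ * (2 * t) = r₀ ^ s * (r₀ * (2 * t)) := by ring
          _ ≤ r₀ ^ s * (c / 2) := mul_le_mul_of_nonneg_left h8 hrs_pos.le
  -- main term values
  have hsta : (s : ℝ) * ta = 2 * π - θ := by
    rw [htadef]
    field_simp
  have hstb : (s : ℝ) * tb = 2 * π - θ + π := by
    rw [htbdef, htadef]
    field_simp
  have hexpv : ∀ x : ℝ, Complex.exp ((x : ℝ) * Complex.I) * v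
      = (‖v‖ : ℂ) * Complex.exp (((x + θ : ℝ) : ℂ) * Complex.I) := by
    intro x
    conv_lhs => rw [← Complex.norm_mul_exp_arg_mul_I v]
    rw [← hθdef]
    rw [show ((x + θ : ℝ) : ℂ) * Complex.I = (x : ℂ) * Complex.I + (θ : ℂ) * Complex.I by
      push_cast; ring]
    rw [Complex.exp_add]
    ring
  have hva : Complex.exp (((2 * π - θ : ℝ) : ℂ) * Complex.I) * v = ((r₀ ^ s * c : ℝ) : ℂ) := by
    rw [hexpv (2 * π - θ)]
    have h1' : (2 * π - θ + θ : ℝ) = 2 * π := by ring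
    rw [h1', habsv]
    have h2' : ((2 * π : ℝ) : ℂ) * Complex.I = 2 * (π : ℂ) * Complex.I := by push_cast; ring
    rw [h2', Complex.exp_two_pi_mul_I, mul_one]
  have hvb : Complex.exp (((2 * π - θ + π : ℝ) : ℂ) * Complex.I) * v = -((r₀ ^ s * c : ℝ) : ℂ) := by
    rw [hexpv (2 * π - θ + π)]
    have h1' : (2 * π - θ + π + θ : ℝ) = 2 * π + π := by ring
    rw [h1', habsv]
    have h2' : ((2 * π + π : ℝ) : ℂ) * Complex.I = 2 * (π : ℂ) * Complex.I + (π : ℂ) * Complex.I := by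
      push_cast
      ring
    rw [h2', Complex.exp_add, Complex.exp_two_pi_mul_I, Complex.exp_pi_mul_I]
    ring
  -- the function g
  set g : ℝ → ℝ := fun t => Complex.normSq ((w₀ * Complex.exp (t * Complex.I)) ^ s
      - w₀ * Complex.exp (t * Complex.I))
    - Complex.normSq ((w₀ * Complex.exp (t * Complex.I)) ^ s - 1) with hgdef
  have hgcont : Continuous g := by
    rw [hgdef]
    apply Continuous.sub
    · exact Complex.continuous_normSq.comp (by fun_prop)
    · exact Complex.continuous_normSq.comp (by fun_prop)
  have hgval : ∀ u : ℝ, g u = Complex.normSq w₀ - 1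
      + 2 * ((w₀ ^ s * Complex.exp ((s * u : ℝ) * Complex.I)) * (1 - (starRingEnd ℂ) w₀)
          + w₀ ^ s * Complex.exp ((s * u : ℝ) * Complex.I) * (starRingEnd ℂ) w₀
            * (1 - Complex.exp (-(u * Complex.I)))).re := by
    intro u
    simp only [hgdef]
    exact h_formula w₀ s u
  have hnsw₀ : Complex.normSq w₀ = r₀ ^ 2 := by
    rw [Complex.normSq_eq_norm_sq, hw₀def, norm_neg, hr₀def]
  have hXa : ((w₀ ^ s * Complex.exp (((s : ℝ) * ta : ℝ) * Complex.I)) * (1 - (starRingEnd ℂ) w₀)).re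
      = r₀ ^ s * c := by
    have hsplit : (w₀ ^ s * Complex.exp (((s : ℝ) * ta : ℝ) * Complex.I)) * (1 - (starRingEnd ℂ) w₀)
        = Complex.exp (((s : ℝ) * ta : ℝ) * Complex.I) * v := by
      rw [hvdef]
      ring
    rw [hsplit, hsta, hva, Complex.ofReal_re]
  have hXb : ((w₀ ^ s * Complex.exp (((s : ℝ) * tb : ℝ) * Complex.I)) * (1 - (starRingEnd ℂ) w₀)).re
      = -(r₀ ^ s * c) := by
    have hsplit : (w₀ ^ s * Complex.exp (((s : ℝ) * tb : ℝ) * Complex.I)) * (1 - (starRingEnd ℂ) w₀)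
        = Complex.exp (((s : ℝ) * tb : ℝ) * Complex.I) * v := by
      rw [hvdef]
      ring
    rw [hsplit, hstb, hvb, Complex.neg_re, Complex.ofReal_re]
  have hga : 0 < g ta := by
    have hgv := hgval ta
    rw [hnsw₀, Complex.add_re, hXa] at hgv
    have hE := key ta htapos.le (le_trans htalt htble)
    have habs' := abs_le.1 hE
    have hcpos : 0 < r₀ ^ s * c := mul_pos hrs_pos hc
    rw [hgv]
    nlinarith [habs'.1, hr₀1, hcpos]
  have hgb : g tb < 0 := by
    have hgv := hgval tb
    rw [hnsw₀, Complex.add_re, hXb] at hgv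
    have hE := key tb (le_trans htapos.le htalt) htble
    have habs' := abs_le.1 hE
    rw [hgv]
    nlinarith [habs'.2, hE3]
  -- intermediate value theorem
  obtain ⟨t, htmem, htg⟩ :=
    intermediate_value_Icc' htalt hgcont.continuousOn ⟨hgb.le, hga.le⟩
  have ht0 : 0 ≤ t := le_trans htapos.le htmem.1
  have ht4 : t ≤ 4 * π / s := le_trans htmem.2 htble
  have ht1 : t ≤ 1 := le_trans ht4 h4πs
  -- the perturbed σ and A
  set σ : ℂ := σ₀ * Complex.exp ((t : ℝ) * Complex.I) with hσdef
  have hσ0 : σ ≠ 0 := mul_ne_zero hσ₀0 (Complex.exp_ne_zero _)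
  have hWσ : -σ = w₀ * Complex.exp ((t : ℝ) * Complex.I) := by
    rw [hσdef, hw₀def]
    ring
  have habsti : ‖(t : ℂ) * Complex.I‖ = t := by
    rw [norm_mul, Complex.norm_I, mul_one, Complex.norm_real, Real.norm_of_nonneg ht0]
  have hdist : ‖σ - σ₀‖ ≤ r₀ * (2 * t) := by
    have hfac : σ - σ₀ = σ₀ * (Complex.exp ((t : ℝ) * Complex.I) - 1) := by
      rw [hσdef]
      ring
    rw [hfac, norm_mul, ← hr₀def]
    have : ‖Complex.exp ((t : ℝ) * Complex.I) - 1‖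
        ≤ 2 * ‖(t : ℂ) * Complex.I‖ :=
      Complex.norm_exp_sub_one_le (by rw [habsti]; exact ht1)
    rw [habsti] at this
    apply mul_le_mul_of_nonneg_left _ hr₀pos.le
    linarith
  obtain ⟨A, hA0, hAσ, hAb⟩ := exists_root_near A₀ hA₀ σ
  refine ⟨A, hA0, ?_, ?_, ?_⟩
  · -- |A - A₀| < ε
    have hb2 : ‖σ - (A₀ + 1 + A₀⁻¹)‖ = ‖σ - σ₀‖ := by rw [← hσ₀def]
    have hsq : ‖A - A₀‖ ^ 2 < ε ^ 2 := by
      calc ‖A - A₀‖ ^ 2 ≤ ‖A₀‖ * ‖σ - σ₀‖ := by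
            rw [← hb2]; exact hAb
      _ ≤ ‖A₀‖ * (r₀ * (2 * t)) :=
            mul_le_mul_of_nonneg_left hdist (norm_nonneg _)
      _ ≤ ‖A₀‖ * (r₀ * (2 * (4 * π / s))) := by
            gcongr
      _ = 8 * π * ‖A₀‖ * r₀ / s := by ring
      _ < ε ^ 2 := by
            rw [div_lt_iff₀ hspos]
            exact hE4
    nlinarith [norm_nonneg (A - A₀), hε]
  · rw [hAσ]
    exact hσ0
  · rw [hAσ]
    have hnσ0 : (-σ) ≠ 0 := neg_ne_zero.2 hσ0
    have hps : (-σ) ^ s ≠ 0 := pow_ne_zero s hnσ0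
    have hzp : (-σ : ℂ) ^ (-(s : ℤ)) = ((-σ) ^ s)⁻¹ := by
      rw [zpow_neg, zpow_natCast]
    rw [hzp]
    have htg' : Complex.normSq ((w₀ * Complex.exp ((t : ℝ) * Complex.I)) ^ s
          - w₀ * Complex.exp ((t : ℝ) * Complex.I))
        - Complex.normSq ((w₀ * Complex.exp ((t : ℝ) * Complex.I)) ^ s - 1) = 0 := htg
    have heqns : ‖(-σ) ^ s - (-σ)‖ = ‖(-σ) ^ s - 1‖ := by
      rw [Complex.norm_def, Complex.norm_def, hWσ]
      rw [sub_eq_zero.1 htg']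
    have e1 : 1 + σ * ((-σ) ^ s)⁻¹ = ((-σ) ^ s - (-σ)) * ((-σ) ^ s)⁻¹ := by
      field_simp
      ring
    have e2 : 1 - ((-σ) ^ s)⁻¹ = ((-σ) ^ s - 1) * ((-σ) ^ s)⁻¹ := by
      field_simp
    rw [e1, e2, norm_mul, norm_mul, heqns]
end

section
/- For every complex number A₀ ≠ 0 with σ₀ = A₀ + 1 + A₀^{−1} ≠ 0 and |(A₀ + 2 + A₀^{−1})·A₀^{−2} + 1| ≤ |A₀ + 1 + A₀^{−1}|, and for every ε > 0, there exists s₀ < ∞ such that for every integer s ≥ s₀ there exists a complex number A ≠ 0 with |A − A₀| < ε and σ = A + 1 + A^{−1} ≠ 0, satisfying |1 + σ·(((σ+1)A^{−2} + 1)/(−σ))^s| = |1 − (((σ+1)A^{−2} + 1)/(−σ))^s|. -/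
open Complex

noncomputable def wkt (A : ℂ) : ℂ :=
  (((A + 1 + A⁻¹) + 1) * (A ^ 2)⁻¹ + 1) / (-(A + 1 + A⁻¹))

lemma wkt_analyticAt {A : ℂ} (hA : A ≠ 0) (hσ : A + 1 + A⁻¹ ≠ 0) :
    AnalyticAt ℂ wkt A := by
  have h1 : AnalyticAt ℂ (fun A : ℂ => A + 1 + A⁻¹) A :=
    ((analyticAt_id.add analyticAt_const).add (analyticAt_id.inv hA))
  have h2 : AnalyticAt ℂ (fun A : ℂ => (A ^ 2)⁻¹) A :=
    (analyticAt_id.pow 2).inv (pow_ne_zero 2 hA)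
  exact (((h1.add analyticAt_const).mul h2).add analyticAt_const).div h1.neg
    (neg_ne_zero.mpr hσ)

lemma normSq_diff (σ z : ℂ) :
    Complex.normSq (1 + σ * z) - Complex.normSq (1 - z) =
      2 * ((σ + 1) * z).re + (Complex.normSq σ - 1) * Complex.normSq z := by
  rw [sub_eq_add_neg (1 : ℂ), Complex.normSq_add, Complex.normSq_add]
  simp [Complex.normSq_mul, Complex.add_re, Complex.mul_re]
  ring

lemma exists_rot (δ : ℝ) (hδ : 0 < δ) (s : ℕ) (hs : 16 * Real.pi ≤ s * δ)
    (v : ℂ) (hv : ‖v‖ = 1) :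
    ∃ t : ℝ, |t| ≤ δ / 8 ∧ Complex.exp (t * Complex.I) ^ s = v := by
  have hπ : (0:ℝ) < Real.pi := Real.pi_pos
  have hspos : (0:ℝ) < s := by
    rcases Nat.eq_zero_or_pos s with h | h
    · exfalso; rw [h] at hs; push_cast at hs; nlinarith
    · exact_mod_cast h
  set φ := v.arg with hφ
  set k : ℤ := ⌈(-(s * δ / 8) - φ) / (2 * Real.pi)⌉ with hk
  refine ⟨(φ + 2 * Real.pi * k) / s, ?_, ?_⟩
  · have h1 : ((-(s * δ / 8) - φ) / (2 * Real.pi)) ≤ k := Int.le_ceil _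
    have h2 : (k:ℝ) < ((-(s * δ / 8) - φ) / (2 * Real.pi)) + 1 := Int.ceil_lt_add_one _
    have hb1 : -(s * δ / 8) ≤ φ + 2 * Real.pi * k := by
      have := (div_le_iff₀ (by positivity)).mp h1; linarith
    have hb2 : φ + 2 * Real.pi * k ≤ s * δ / 8 := by
      have hxm : ((-(s * δ / 8) - φ) / (2 * Real.pi)) * (2 * Real.pi) =
          -(s * δ / 8) - φ := div_mul_cancel₀ _ (by positivity)
      have h3 : (k:ℝ) * (2 * Real.pi) <
          (-(s * δ / 8) - φ) + 2 * Real.pi := by nlinarith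
      nlinarith
    rw [abs_div, abs_of_pos hspos, div_le_iff₀ hspos, abs_le]
    constructor <;> nlinarith
  · have hsne : (s:ℂ) ≠ 0 := by
      exact_mod_cast ne_of_gt (show (0:ℝ) < s from hspos)
    have hst : (((φ + 2 * Real.pi * k) / s : ℝ) : ℂ) * Complex.I * s =
        (φ : ℂ) * Complex.I + k * (2 * Real.pi * Complex.I) := by
      push_cast
      rw [div_mul_eq_mul_div, div_mul_eq_mul_div, div_eq_iff hsne]
      ring_nf
    rw [← Complex.exp_nat_mul]
    rw [show (s:ℂ) * ((((φ + 2 * Real.pi * k) / s : ℝ)) * Complex.I) =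
        (((φ + 2 * Real.pi * k) / s : ℝ) : ℂ) * Complex.I * s by ring, hst,
      Complex.exp_add, Complex.exp_int_mul_two_pi_mul_I, mul_one]
    rw [hφ]
    have := Complex.norm_mul_exp_arg_mul_I v
    rw [hv] at this; simpa using this

lemma wkt_root_eq {A : ℂ} (hA : A ≠ 0) (hσ : A + 1 + A⁻¹ ≠ 0) (c : ℂ)
    (h : wkt A = c) : (A + 1)^2 + A^3 + c * (A^2 * (A^2 + A + 1)) = 0 := by
  unfold wkt at h
  rw [div_eq_iff (neg_ne_zero.mpr hσ)] at h
  field_simp at h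
  have key : A * ((A + 1)^2 + A^3 + c * (A^2 * (A^2 + A + 1))) = A * 0 := by
    linear_combination A * h
  exact mul_left_cancel₀ hA key

lemma wkt_not_const {A₀ : ℂ} (hA₀ : A₀ ≠ 0) (hσ₀ : A₀ + 1 + A₀⁻¹ ≠ 0) :
    ¬ (∀ᶠ A in nhds A₀, wkt A = wkt A₀) := by
  intro h
  have hne : ∀ᶠ A in nhds A₀, A ≠ 0 := eventually_ne_nhds hA₀
  have hcσ : ContinuousAt (fun A : ℂ => A + 1 + A⁻¹) A₀ := by
    have : ContinuousAt (fun A : ℂ => A⁻¹) A₀ := continuousAt_inv₀ hA₀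
    fun_prop (disch := assumption)
  have hσne : ∀ᶠ A in nhds A₀, A + 1 + A⁻¹ ≠ 0 := hcσ.eventually_ne hσ₀
  obtain ⟨ρ, hρ, hball⟩ := Metric.eventually_nhds_iff.mp ((h.and hne).and hσne)
  set c := wkt A₀ with hc
  set p : Polynomial ℂ :=
    (Polynomial.X + 1)^2 + Polynomial.X^3 +
      Polynomial.C c * (Polynomial.X^2 * (Polynomial.X^2 + Polynomial.X + 1)) with hp
  have hproots : {x : ℂ | p.IsRoot x}.Infinite := by
    apply Set.infinite_of_injective_forall_mem
      (f := fun n : ℕ => A₀ + ((ρ / (n + 2) : ℝ) : ℂ))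
    · intro m n hmn
      simp only [add_right_inj, Complex.ofReal_inj] at hmn
      have hm : (0:ℝ) < m + 2 := by positivity
      have hn : (0:ℝ) < n + 2 := by positivity
      field_simp at hmn
      have h' : (m:ℝ) = n := by linarith
      exact_mod_cast h'
    · intro n
      have hmem : dist (A₀ + ((ρ / (n + 2) : ℝ) : ℂ)) A₀ < ρ := by
        rw [dist_eq_norm]
        simp only [add_sub_cancel_left]
        rw [Complex.norm_real, Real.norm_eq_abs, abs_of_pos (by positivity)]
        rw [div_lt_iff₀ (by positivity)]
        nlinarith
      obtain ⟨⟨hw, hA⟩, hσ⟩ := hball hmem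
      have := wkt_root_eq hA hσ c hw
      simpa [hp, Polynomial.IsRoot] using this
  have hp0 : p = 0 := Polynomial.eq_zero_of_infinite_isRoot p hproots
  have : p.eval 0 = 1 := by simp [hp]
  rw [hp0] at this
  simp at this

lemma re_ge_of_close {x : ℂ} (h : ‖x - 1‖ < 1/10) : (9:ℝ)/10 ≤ x.re := by
  have h1 := Complex.abs_re_le_norm (x - 1)
  have h2 : (x - 1).re = x.re - 1 := by simp
  rw [h2] at h1
  have := abs_le.mp (le_of_lt (lt_of_le_of_lt h1 h))
  linarith [this.1]

lemma G_est_pos (σ β : ℂ) (hβ : β ≠ 0) (h10 : ‖(σ + 1)/β - 1‖ < 1/10)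
    (C : ℝ) (hC : |Complex.normSq σ - 1| ≤ C) (z : ℂ) (ρ : ℝ) (hρ : 0 < ρ)
    (hz : β * z = (ρ : ℂ))
    (hsmall : C * ‖z‖ < ‖β‖ * (9/10)) :
    0 < Complex.normSq (1 + σ * z) - Complex.normSq (1 - z) := by
  rw [normSq_diff]
  have habs : ‖β‖ * ‖z‖ = ρ := by
    rw [← norm_mul, hz, Complex.norm_real, Real.norm_eq_abs, abs_of_pos hρ]
  have hzne : z ≠ 0 := by
    intro h; rw [h, mul_zero] at hz
    exact (ne_of_gt hρ) (by exact_mod_cast hz.symm)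
  have hzpos : 0 < ‖z‖ := by
    simpa [norm_pos_iff] using hzne
  have hre : ρ * (9/10) ≤ ((σ + 1) * z).re := by
    have hfac : (σ + 1) * z = ((σ + 1)/β) * (ρ : ℂ) := by
      rw [← hz]; field_simp
    rw [hfac]
    have : (((σ + 1)/β) * (ρ : ℂ)).re = ρ * ((σ + 1)/β).re := by
      simp [Complex.mul_re]; ring
    rw [this]
    have := re_ge_of_close h10
    nlinarith
  have hns : Complex.normSq z = ‖z‖ ^ 2 := Complex.normSq_eq_norm_sq z
  have hbound : |(Complex.normSq σ - 1) * Complex.normSq z| ≤ C * ‖z‖ ^ 2 := by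
    rw [abs_mul]
    have h1 : |Complex.normSq z| = ‖z‖ ^ 2 := by
      rw [hns]; exact abs_of_nonneg (by positivity)
    rw [h1]
    exact mul_le_mul_of_nonneg_right hC (by positivity)
  have h2 : -(C * ‖z‖ ^ 2) ≤ (Complex.normSq σ - 1) * Complex.normSq z :=
    neg_le_of_abs_le hbound
  nlinarith [habs, hre, hzpos]

lemma G_est_neg (σ β : ℂ) (hβ : β ≠ 0) (h10 : ‖(σ + 1)/β - 1‖ < 1/10)
    (C : ℝ) (hC : |Complex.normSq σ - 1| ≤ C) (z : ℂ) (ρ : ℝ) (hρ : 0 < ρ)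
    (hz : β * z = -(ρ : ℂ))
    (hsmall : C * ‖z‖ < ‖β‖ * (9/10)) :
    Complex.normSq (1 + σ * z) - Complex.normSq (1 - z) < 0 := by
  rw [normSq_diff]
  have habs : ‖β‖ * ‖z‖ = ρ := by
    rw [← norm_mul, hz]
    simp [abs_of_pos hρ]
  have hzne : z ≠ 0 := by
    intro h; rw [h, mul_zero] at hz
    have : (ρ:ℂ) = 0 := by linear_combination hz
    exact (ne_of_gt hρ) (by exact_mod_cast this)
  have hzpos : 0 < ‖z‖ := by
    simpa [norm_pos_iff] using hzne
  have hre : ((σ + 1) * z).re ≤ -(ρ * (9/10)) := by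
    have hfac : (σ + 1) * z = ((σ + 1)/β) * (-(ρ : ℂ)) := by
      rw [← hz]; field_simp
    rw [hfac]
    have : (((σ + 1)/β) * (-(ρ : ℂ))).re = -(ρ * ((σ + 1)/β).re) := by
      simp [Complex.mul_re]; ring
    rw [this]
    have := re_ge_of_close h10
    nlinarith
  have hns : Complex.normSq z = ‖z‖ ^ 2 := Complex.normSq_eq_norm_sq z
  have hbound : |(Complex.normSq σ - 1) * Complex.normSq z| ≤ C * ‖z‖ ^ 2 := by
    rw [abs_mul]
    have h1 : |Complex.normSq z| = ‖z‖ ^ 2 := by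
      rw [hns]; exact abs_of_nonneg (by positivity)
    rw [h1]
    exact mul_le_mul_of_nonneg_right hC (by positivity)
  have h2 : (Complex.normSq σ - 1) * Complex.normSq z ≤ C * ‖z‖ ^ 2 :=
    le_of_abs_le hbound
  nlinarith [habs, hre, hzpos]

/-- For every `A₀ ≠ 0` with `σ₀ = A₀ + 1 + A₀⁻¹ ≠ 0` and
`|(A₀ + 2 + A₀⁻¹)·A₀⁻² + 1| ≤ |A₀ + 1 + A₀⁻¹|`, and every `ε > 0`, there exists `s₀`
such that for every integer `s ≥ s₀` there is `A ≠ 0` with `|A − A₀| < ε`,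
`σ = A + 1 + A⁻¹ ≠ 0`, and
`|1 + σ·(((σ+1)A⁻² + 1)/(−σ))^s| = |1 − (((σ+1)A⁻² + 1)/(−σ))^s|`. -/
theorem limit_zeros_kinked_theta (A₀ : ℂ) (hA₀ : A₀ ≠ 0)
    (hσ₀ : A₀ + 1 + A₀⁻¹ ≠ 0)
    (hreg : ‖(A₀ + 2 + A₀⁻¹) * (A₀ ^ 2)⁻¹ + 1‖ ≤
      ‖A₀ + 1 + A₀⁻¹‖)
    (ε : ℝ) (hε : 0 < ε) :
    ∃ s₀ : ℕ, ∀ s : ℕ, s₀ ≤ s →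
      ∃ A : ℂ, A ≠ 0 ∧ ‖A - A₀‖ < ε ∧ A + 1 + A⁻¹ ≠ 0 ∧
        ‖1 + (A + 1 + A⁻¹) *
            ((((A + 1 + A⁻¹) + 1) * (A ^ 2)⁻¹ + 1) / (-(A + 1 + A⁻¹))) ^ s‖ =
          ‖1 - ((((A + 1 + A⁻¹) + 1) * (A ^ 2)⁻¹ + 1) /
            (-(A + 1 + A⁻¹))) ^ s‖ := by
  by_cases hnum : ((A₀ + 1 + A₀⁻¹) + 1) * (A₀ ^ 2)⁻¹ + 1 = 0
  · refine ⟨1, fun s hs => ⟨A₀, hA₀, by simpa using hε, hσ₀, ?_⟩⟩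
    rw [hnum, zero_div, zero_pow (by omega : s ≠ 0)]
    simp
  by_cases hA1 : A₀ = -1
  · refine ⟨0, fun s _ => ⟨-1, by norm_num, ?_, by norm_num, ?_⟩⟩
    · rw [hA1]; simpa using hε
    · norm_num
  · -- main case
    have hβ : (A₀ + 1 + A₀⁻¹) + 1 ≠ 0 := by
      intro h
      apply hA1
      have hinv : A₀ * A₀⁻¹ = 1 := mul_inv_cancel₀ hA₀
      have h3 : (A₀ + 1)^2 = 0 := by linear_combination A₀ * h - hinv
      have h4 := pow_eq_zero_iff (n := 2) (by norm_num) |>.mp h3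
      exact eq_neg_of_add_eq_zero_left h4
    have hw₀def : wkt A₀ = (((A₀ + 1 + A₀⁻¹) + 1) * (A₀ ^ 2)⁻¹ + 1) /
        (-(A₀ + 1 + A₀⁻¹)) := rfl
    have hw₀ne : wkt A₀ ≠ 0 := by
      rw [hw₀def]
      exact div_ne_zero hnum (neg_ne_zero.mpr hσ₀)
    have hw₀le : ‖wkt A₀‖ ≤ 1 := by
      have h2 : A₀ + 2 + A₀⁻¹ = (A₀ + 1 + A₀⁻¹) + 1 := by ring
      rw [h2] at hreg
      rw [hw₀def, norm_div, norm_neg]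
      exact (div_le_one (norm_pos_iff.mpr hσ₀)).mpr hreg
    have hσcont : ContinuousAt (fun A : ℂ => A + 1 + A⁻¹) A₀ := by
      have h1 : ContinuousAt (fun A : ℂ => A⁻¹) A₀ := continuousAt_inv₀ hA₀
      exact (continuousAt_id.add continuousAt_const).add h1
    have E1 : ∀ᶠ A in nhds A₀, A ≠ 0 := eventually_ne_nhds hA₀
    have E2 : ∀ᶠ A in nhds A₀, A + 1 + A⁻¹ ≠ 0 := hσcont.eventually_ne hσ₀
    have E3 : ∀ᶠ A in nhds A₀,
        ‖(A + 1 + A⁻¹ + 1) / ((A₀ + 1 + A₀⁻¹) + 1) - 1‖ < 1/10 := by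
      have hc : ContinuousAt
          (fun A : ℂ => ‖(A + 1 + A⁻¹ + 1) / ((A₀ + 1 + A₀⁻¹) + 1) - 1‖) A₀ :=
        continuous_norm.continuousAt.comp
          (((hσcont.add continuousAt_const).div continuousAt_const hβ).sub
            continuousAt_const)
      have h0 : ‖(A₀ + 1 + A₀⁻¹ + 1) / ((A₀ + 1 + A₀⁻¹) + 1) - 1‖ = 0 := by
        rw [div_self hβ]
        simp
      have hc2 := hc.tendsto
      rw [h0] at hc2
      exact hc2.eventually_lt_const (by norm_num)
    set C := |Complex.normSq (A₀ + 1 + A₀⁻¹) - 1| + 1 with hCdef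
    have hC0 : 0 < C := by positivity
    have E4 : ∀ᶠ A in nhds A₀, |Complex.normSq (A + 1 + A⁻¹) - 1| ≤ C := by
      have hc : ContinuousAt (fun A : ℂ => |Complex.normSq (A + 1 + A⁻¹) - 1|) A₀ :=
        _root_.continuous_abs.continuousAt.comp
          ((Complex.continuous_normSq.continuousAt.comp hσcont).sub continuousAt_const)
      have hc2 := hc.tendsto
      have hlt : (fun A : ℂ => |Complex.normSq (A + 1 + A⁻¹) - 1|) A₀ < C := by
        simp only [hCdef]; linarith [le_refl (|Complex.normSq (A₀ + 1 + A₀⁻¹) - 1|)]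
      exact (hc2.eventually_lt_const hlt).mono fun A h => le_of_lt h
    obtain ⟨r₀, hr₀, hball⟩ := Metric.eventually_nhds_iff.mp (((E1.and E2).and E3).and E4)
    set r := min r₀ ε with hrdef
    have hr : 0 < r := lt_min hr₀ hε
    have hrr₀ : r ≤ r₀ := min_le_left _ _
    have hprops : ∀ A ∈ Metric.ball A₀ r,
        ((A ≠ 0 ∧ A + 1 + A⁻¹ ≠ 0) ∧
          ‖(A + 1 + A⁻¹ + 1) / ((A₀ + 1 + A₀⁻¹) + 1) - 1‖ < 1/10) ∧
          |Complex.normSq (A + 1 + A⁻¹) - 1| ≤ C := fun A hA =>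
      hball (lt_of_lt_of_le (Metric.mem_ball.mp hA) hrr₀)
    have han : AnalyticAt ℂ wkt A₀ := wkt_analyticAt hA₀ hσ₀
    have hmap : nhds (wkt A₀) ≤ Filter.map wkt (nhds A₀) :=
      han.eventually_constant_or_nhds_le_map_nhds.resolve_left (wkt_not_const hA₀ hσ₀)
    have himg : wkt '' Metric.ball A₀ r ∈ nhds (wkt A₀) :=
      hmap (Filter.image_mem_map (Metric.ball_mem_nhds A₀ hr))
    obtain ⟨δ', hδ'pos, hδ'sub⟩ := Metric.mem_nhds_iff.mp himg
    set δ := min δ' 1 with hδdef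
    have hδpos : 0 < δ := lt_min hδ'pos one_pos
    have hδ1 : δ ≤ 1 := min_le_right _ _
    have hδδ' : δ ≤ δ' := min_le_left _ _
    set w₁ : ℂ := wkt A₀ * ((1 - δ/2 : ℝ) : ℂ) with hw₁
    have hhalf : (0:ℝ) < 1 - δ/2 := by linarith
    set q := ‖wkt A₀‖ * (1 - δ/2) with hq
    have hq0 : 0 < q := mul_pos (norm_pos_iff.mpr hw₀ne) hhalf
    have hq1 : q < 1 := by nlinarith [norm_pos_iff.mpr hw₀ne, hw₀le, hδpos, hδ1, hhalf]
    have habsw₁ : ‖w₁‖ = q := by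
      rw [hw₁, norm_mul, Complex.norm_real, Real.norm_eq_abs, abs_of_pos hhalf]
    have hw₁ne : w₁ ≠ 0 := by
      intro h
      rw [h, norm_zero] at habsw₁
      exact absurd habsw₁.symm (ne_of_gt hq0)
    set b := ‖(A₀ + 1 + A₀⁻¹) + 1‖ with hbdef
    have hb0 : 0 < b := norm_pos_iff.mpr hβ
    obtain ⟨N, hN⟩ := exists_pow_lt_of_lt_one
      (show (0:ℝ) < (b * (9/10))/C by positivity) hq1
    refine ⟨max (N + 1) (Nat.ceil (16 * Real.pi / δ) + 1), fun s hs => ?_⟩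
    have hsN : N ≤ s := le_trans (le_trans (Nat.le_succ N) (le_max_left _ _)) hs
    have hsδ : 16 * Real.pi ≤ s * δ := by
      have h1 : (Nat.ceil (16 * Real.pi / δ) : ℝ) ≤ s := by
        exact_mod_cast le_trans (le_trans (Nat.le_succ _) (le_max_right _ _)) hs
      have h2 : 16 * Real.pi / δ ≤ Nat.ceil (16 * Real.pi / δ) := Nat.le_ceil _
      exact (div_le_iff₀ hδpos).mp (le_trans h2 h1)
    set u := w₁ ^ s with hu
    have habsu : ‖u‖ = q ^ s := by rw [hu, norm_pow, habsw₁]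
    have hune : u ≠ 0 := pow_ne_zero s hw₁ne
    set m := ((A₀ + 1 + A₀⁻¹) + 1) * u with hm
    have hmne : m ≠ 0 := mul_ne_zero hβ hune
    have habsm : ‖m‖ = b * q ^ s := by rw [hm, norm_mul, habsu]
    have habsmpos : 0 < ‖m‖ := norm_pos_iff.mpr hmne
    set v : ℂ := (starRingEnd ℂ) m / (‖m‖ : ℂ) with hv
    have habsv : ‖v‖ = 1 := by
      rw [hv, norm_div, Complex.norm_conj, Complex.norm_real, Real.norm_eq_abs, abs_of_pos habsmpos,
        div_self (ne_of_gt habsmpos)]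
    have hmv : m * v = ((‖m‖ : ℝ) : ℂ) := by
      rw [hv, ← mul_div_assoc, Complex.mul_conj, Complex.normSq_eq_norm_sq,
        div_eq_iff (show (‖m‖ : ℂ) ≠ 0 by exact_mod_cast ne_of_gt habsmpos)]
      push_cast; ring
    have hqs : C * (q ^ s) < b * (9/10) := by
      have h1 : q ^ s ≤ q ^ N := pow_le_pow_of_le_one (le_of_lt hq0) (le_of_lt hq1) hsN
      have h2 : C * q ^ N < C * ((b * (9/10))/C) := by
        exact mul_lt_mul_of_pos_left hN hC0
      rw [mul_div_cancel₀ _ (ne_of_gt hC0)] at h2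
      calc C * q ^ s ≤ C * q ^ N := mul_le_mul_of_nonneg_left h1 (le_of_lt hC0)
        _ < b * (9/10) := h2
    have hfind : ∀ v' : ℂ, ‖v'‖ = 1 →
        ∃ A, A ∈ Metric.ball A₀ r ∧ wkt A ^ s = u * v' := by
      intro v' hv'
      obtain ⟨t, ht, hexp⟩ := exists_rot δ hδpos s hsδ v' hv'
      set Z := w₁ * Complex.exp ((t:ℂ) * Complex.I) with hZ
      have hZball : Z ∈ Metric.ball (wkt A₀) δ' := by
        rw [Metric.mem_ball, Complex.dist_eq]
        have hdiff : Z - wkt A₀ =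
            wkt A₀ * (((1 - δ/2 : ℝ) : ℂ) * Complex.exp ((t:ℂ) * Complex.I) - 1) := by
          rw [hZ, hw₁]; ring
        rw [hdiff, norm_mul]
        have habsexp : ‖Complex.exp ((t:ℂ) * Complex.I)‖ = 1 := by
          rw [Complex.norm_exp]; simp
        have h2 : ‖Complex.exp ((t:ℂ) * Complex.I) - 1‖ ≤ 2*|t| := by
          have hb1 : ‖(t:ℂ) * Complex.I‖ ≤ 1 := by
            rw [norm_mul, Complex.norm_I, Complex.norm_real, Real.norm_eq_abs, mul_one]
            linarith [ht, hδ1]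
          have := Complex.norm_exp_sub_one_le hb1
          rw [norm_mul, Complex.norm_I, Complex.norm_real, Real.norm_eq_abs, mul_one] at this
          exact this
        have hsplit : ((1 - δ/2 : ℝ) : ℂ) * Complex.exp ((t:ℂ) * Complex.I) - 1 =
            (Complex.exp ((t:ℂ) * Complex.I) - 1) -
              ((δ/2 : ℝ) : ℂ) * Complex.exp ((t:ℂ) * Complex.I) := by
          push_cast; ring
        have h3 : ‖((1 - δ/2 : ℝ) : ℂ) * Complex.exp ((t:ℂ) * Complex.I) - 1‖
            ≤ 3*δ/4 := by
          rw [hsplit]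
          have h4 := norm_sub_le (Complex.exp ((t:ℂ) * Complex.I) - 1)
            (((δ/2 : ℝ) : ℂ) * Complex.exp ((t:ℂ) * Complex.I))
          have h5 : ‖((δ/2 : ℝ) : ℂ) * Complex.exp ((t:ℂ) * Complex.I)‖ = δ/2 := by
            rw [norm_mul, habsexp, Complex.norm_real, Real.norm_eq_abs, mul_one, abs_of_pos (by linarith)]
          have ht8 : |t| ≤ δ/8 := ht
          calc ‖(Complex.exp ((t:ℂ) * Complex.I) - 1) -
                ((δ/2 : ℝ) : ℂ) * Complex.exp ((t:ℂ) * Complex.I)‖ ≤ _ := h4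
            _ ≤ 2*|t| + δ/2 := by rw [h5]; linarith
            _ ≤ 3*δ/4 := by linarith
        calc ‖wkt A₀‖ *
              ‖((1 - δ/2 : ℝ) : ℂ) * Complex.exp ((t:ℂ) * Complex.I) - 1‖
            ≤ 1 * (3*δ/4) := by
              apply mul_le_mul hw₀le h3 (norm_nonneg _) zero_le_one
          _ < δ' := by rw [one_mul]; linarith [hδδ', hδpos]
      obtain ⟨A, hAball, hwA⟩ := hδ'sub hZball
      refine ⟨A, hAball, ?_⟩
      rw [hwA, hZ, mul_pow, hexp, ← hu]
    obtain ⟨Ap, hApball, hApz⟩ := hfind v habsv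
    obtain ⟨An, hAnball, hAnz⟩ := hfind (-v) (by rw [norm_neg]; exact habsv)
    have hGp : 0 < Complex.normSq (1 + (Ap + 1 + Ap⁻¹) * wkt Ap ^ s) -
        Complex.normSq (1 - wkt Ap ^ s) := by
      obtain ⟨⟨⟨hAp0, hσAp⟩, h10⟩, hCp⟩ := hprops Ap hApball
      apply G_est_pos (Ap + 1 + Ap⁻¹) ((A₀ + 1 + A₀⁻¹) + 1) hβ h10 C hCp _
        (‖m‖) habsmpos
      · rw [hApz, ← mul_assoc, ← hm]; exact hmv
      · rw [hApz, norm_mul, habsu, habsv, mul_one, ← hbdef]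
        exact hqs
    have hGn : Complex.normSq (1 + (An + 1 + An⁻¹) * wkt An ^ s) -
        Complex.normSq (1 - wkt An ^ s) < 0 := by
      obtain ⟨⟨⟨hAn0, hσAn⟩, h10⟩, hCn⟩ := hprops An hAnball
      apply G_est_neg (An + 1 + An⁻¹) ((A₀ + 1 + A₀⁻¹) + 1) hβ h10 C hCn _
        (‖m‖) habsmpos
      · rw [hAnz]
        have : ((A₀ + 1 + A₀⁻¹) + 1) * (u * -v) = -(m * v) := by rw [hm]; ring
        rw [this, hmv]
      · rw [hAnz, norm_mul, habsu, norm_neg, habsv, mul_one, ← hbdef]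
        exact hqs
    set Gf : ℂ → ℝ := fun A => Complex.normSq (1 + (A + 1 + A⁻¹) * wkt A ^ s) -
      Complex.normSq (1 - wkt A ^ s) with hGfdef
    have hGcont : ∀ A ∈ Metric.ball A₀ r, ContinuousAt Gf A := by
      intro A hA
      obtain ⟨⟨⟨hA0, hσA⟩, _⟩, _⟩ := hprops A hA
      have hwc : ContinuousAt wkt A := (wkt_analyticAt hA0 hσA).continuousAt
      have hσc : ContinuousAt (fun A : ℂ => A + 1 + A⁻¹) A :=
        (continuousAt_id.add continuousAt_const).add (continuousAt_inv₀ hA0)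
      exact (Complex.continuous_normSq.continuousAt.comp
          (continuousAt_const.add (hσc.mul (hwc.pow s)))).sub
        (Complex.continuous_normSq.continuousAt.comp (continuousAt_const.sub (hwc.pow s)))
    set P : ℝ → ℂ := fun τ => Ap + τ • (An - Ap) with hP
    have hPmem : ∀ τ ∈ Set.Icc (0:ℝ) 1, P τ ∈ Metric.ball A₀ r := by
      intro τ hτ
      have hPτ : P τ = (1 - τ) • Ap + τ • An := by
        rw [hP]
        simp only [smul_sub, sub_smul, one_smul]
        ring
      rw [hPτ]
      exact (convex_ball A₀ r) hApball hAnball (by linarith [hτ.1, hτ.2]) hτ.1 (by ring)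
    have hPcont : Continuous P := by
      rw [hP]
      exact continuous_const.add (continuous_id.smul continuous_const)
    have hPc : ContinuousOn (fun τ => Gf (P τ)) (Set.Icc 0 1) := fun τ hτ =>
      ((hGcont _ (hPmem τ hτ)).comp hPcont.continuousAt).continuousWithinAt
    have h0mem : (0:ℝ) ∈ Set.Icc (Gf (P 1)) (Gf (P 0)) := by
      have hP0 : P 0 = Ap := by simp [hP]
      have hP1 : P 1 = An := by simp [hP]
      rw [hP0, hP1]
      exact ⟨le_of_lt hGn, le_of_lt hGp⟩
    obtain ⟨τ, hτmem, hτeq⟩ := intermediate_value_Icc' (by norm_num : (0:ℝ) ≤ 1) hPc h0mem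
    obtain ⟨⟨⟨h1, h2⟩, _⟩, _⟩ := hprops _ (hPmem τ hτmem)
    refine ⟨P τ, h1, ?_, h2, ?_⟩
    · have hd := Metric.mem_ball.mp (hPmem τ hτmem)
      rw [Complex.dist_eq] at hd
      exact lt_of_lt_of_le hd (min_le_right r₀ ε)
    · have hG0 : Gf (P τ) = 0 := hτeq
      rw [hGfdef] at hG0
      simp only at hG0
      show ‖1 + (P τ + 1 + (P τ)⁻¹) * wkt (P τ) ^ s‖ =
        ‖1 - wkt (P τ) ^ s‖
      rw [Complex.norm_def, Complex.norm_def]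
      congr 1
      linarith
end
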